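/- arXiv:2201.12531 — 4 statements merged into one kernel-verified Lean document; each statement's English description precedes it below -/
import Mathlib

section
/- Let G be a connected bipartite graph with colour classes V and E, let f be a hypertree of G, and let E' ⊆ E be nonempty. Then the sum of f(e) over e ∈ E' is at most μ(E') = |⋃E'| − c(E'), where ⋃E' is the set of vertices of V adjacent to some element of E', and c(E') is the number of connected components of the subgraph G|_{E'} induced by E', the edges incident to E', and their endpoints in V. -/
open SimpleGraph

variable {V E : Type*}

/-- The bipartite graph on `V ⊕ E` determined by the incidence relation `r`. -/
def BipGraph (r : V → E → Prop) : SimpleGraph (V ⊕ E) where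
  Adj x y := (∃ v e, x = Sum.inl v ∧ y = Sum.inr e ∧ r v e) ∨
             (∃ v e, x = Sum.inr e ∧ y = Sum.inl v ∧ r v e)
  symm := by
    constructor
    rintro x y (⟨v, e, rfl, rfl, h⟩ | ⟨v, e, rfl, rfl, h⟩)
    · exact Or.inr ⟨v, e, rfl, rfl, h⟩
    · exact Or.inl ⟨v, e, rfl, rfl, h⟩
  loopless := by
    constructor
    rintro x (⟨v, e, rfl, h, _⟩ | ⟨v, e, rfl, h, _⟩) <;> simp_all

/-- `τ` is a spanning tree of `G`. -/
def IsSpanningTree {α : Type*} (G τ : SimpleGraph α) : Prop :=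
  τ ≤ G ∧ τ.Connected ∧ τ.IsAcyclic

/-- A hypertree of the hypergraph induced by the bipartite graph `BipGraph r`
(with `E` the set of hyperedges): a function realized by a spanning tree. -/
def IsHypertree (r : V → E → Prop) (f : E → ℕ) : Prop :=
  ∃ τ : SimpleGraph (V ⊕ E), IsSpanningTree (BipGraph r) τ ∧
    ∀ e : E, (τ.neighborSet (Sum.inr e)).ncard = f e + 1

/-- The restriction of a graph `H` on `V ⊕ E` (typically a subgraph of `BipGraph r`)
to the hyperedge set `A` together with all `V`-vertices incident (in `G`) to `A`. -/
def BipRestrict (r : V → E → Prop) (H : SimpleGraph (V ⊕ E)) (A : Set E) :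
    SimpleGraph ({v : V // ∃ e ∈ A, r v e} ⊕ A) where
  Adj x y := H.Adj (Sum.elim (fun v => Sum.inl v.1) (fun e => Sum.inr e.1) x)
               (Sum.elim (fun v => Sum.inl v.1) (fun e => Sum.inr e.1) y)
  symm := ⟨fun _ _ h => H.adj_symm h⟩
  loopless := by
    constructor
    rintro (v | e) h <;> exact H.irrefl h

/-- `μ(A) = |⋃A| - c(A)`. -/
noncomputable def mu (r : V → E → Prop) (A : Set E) : ℕ :=
  Nat.card {v : V // ∃ e ∈ A, r v e} -
    Nat.card (BipRestrict r (BipGraph r) A).ConnectedComponent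

/-- `A` is tight at `f`. -/
noncomputable def Tight (r : V → E → Prop) (f : E → ℕ) (A : Finset E) : Prop :=
  ∑ e ∈ A, f e = mu r (↑A : Set E)

open Classical in
/-- The function obtained from `f` by decreasing `f e` by one and increasing `f e'` by one. -/
noncomputable def Transfer (f : E → ℕ) (e e' : E) : E → ℕ :=
  fun x => if x = e then f e - 1 else if x = e' then f e' + 1 else f x

/-- The internal inactivity of `f`: the number of internally inactive hyperedges. -/
noncomputable def intInact (r : V → E → Prop) [LT E] (f : E → ℕ) : ℕ :=
  Nat.card {e : E // ∃ e', e' < e ∧ IsHypertree r (Transfer f e e')}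

/-- The external inactivity of `f`: the number of externally inactive hyperedges. -/
noncomputable def extInact (r : V → E → Prop) [LT E] (f : E → ℕ) : ℕ :=
  Nat.card {e : E // ∃ e', e' < e ∧ IsHypertree r (Transfer f e' e)}

/-- The interior polynomial `I_G(x) = ∑_f x^{ῑ(f)}`. -/
noncomputable def interiorPoly (r : V → E → Prop) [Fintype E] [LT E] : Polynomial ℤ :=
  ∑ i ∈ Finset.range (Fintype.card E + 1),
    Polynomial.C ((Nat.card {f : E → ℕ // IsHypertree r f ∧ intInact r f = i} : ℕ) : ℤ) *
      Polynomial.X ^ i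

/-- The exterior polynomial `X_G(y) = ∑_f y^{ε̄(f)}`. -/
noncomputable def exteriorPoly (r : V → E → Prop) [Fintype E] [LT E] : Polynomial ℤ :=
  ∑ i ∈ Finset.range (Fintype.card E + 1),
    Polynomial.C ((Nat.card {f : E → ℕ // IsHypertree r f ∧ extInact r f = i} : ℕ) : ℤ) *
      Polynomial.X ^ i

open Classical in
lemma forest_card_bound {α : Type*} [Fintype α] :
    ∀ (n : ℕ) (G : SimpleGraph α), G.edgeSet.ncard = n → G.IsAcyclic →
      n + Nat.card G.ConnectedComponent ≤ Fintype.card α := by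
  intro n
  induction n with
  | zero =>
    intro G _ _
    have hsurj : Function.Surjective (G.connectedComponentMk) :=
      ConnectedComponent.ind fun v => ⟨v, rfl⟩
    simpa [Nat.card_eq_fintype_card] using Nat.card_le_card_of_surjective _ hsurj
  | succ n ih =>
    intro G hcard hacyc
    have hfin : G.edgeSet.Finite := Set.toFinite _
    have hne : G.edgeSet.Nonempty := by
      rw [← Set.ncard_pos hfin, hcard]; omega
    obtain ⟨e, he⟩ := hne
    obtain ⟨a, b, he⟩ : ∃ a b : α, s(a, b) ∈ G.edgeSet :=
      Sym2.ind (fun a b h => ⟨a, b, h⟩) e he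
    have hab : G.Adj a b := he
    set G' := G.deleteEdges {s(a, b)} with hG'
    have hle : G' ≤ G := G.deleteEdges_le _
    have hacyc' : G'.IsAcyclic := by
      intro v c hc
      exact hacyc (c.map (Hom.ofLE hle))
        (hc.map (fun x y h => by simpa using h))
    have hedge : G'.edgeSet.ncard = n := by
      rw [hG', edgeSet_deleteEdges, Set.ncard_diff_singleton_of_mem he, hcard]; omega
    -- the bridge property
    have hbr : ¬ G'.Reachable a b := by
      have := (isAcyclic_iff_forall_adj_isBridge.mp hacyc) hab
      exact isBridge_iff.mp this
    -- the component map
    let φ : G'.ConnectedComponent → G.ConnectedComponent :=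
      ConnectedComponent.map (Hom.ofLE hle)
    have hsurj : Function.Surjective φ :=
      ConnectedComponent.ind fun v => ⟨G'.connectedComponentMk v, by simp [φ]⟩
    have hninj : ¬ Function.Injective φ := by
      intro hinj
      apply hbr
      have : φ (G'.connectedComponentMk a) = φ (G'.connectedComponentMk b) := by
        simp only [φ, ConnectedComponent.map_mk, Hom.ofLE_apply]
        exact ConnectedComponent.sound hab.reachable
      exact ConnectedComponent.exact (hinj this)
    haveI : Finite G'.ConnectedComponent :=
      Finite.of_surjective _ (ConnectedComponent.ind (fun v => ⟨v, rfl⟩) :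
        Function.Surjective G'.connectedComponentMk)
    haveI : Finite G.ConnectedComponent := Finite.of_surjective _ hsurj
    haveI := Fintype.ofFinite G'.ConnectedComponent
    haveI := Fintype.ofFinite G.ConnectedComponent
    have hlt : Nat.card G.ConnectedComponent < Nat.card G'.ConnectedComponent := by
      simpa [Nat.card_eq_fintype_card] using
        Fintype.card_lt_of_surjective_not_injective φ hsurj hninj
    have := ih G' hedge hacyc'
    omega

open Classical in
lemma bip_sum_degree {α β : Type*} [Fintype α] [Fintype β] (H : SimpleGraph (α ⊕ β))
    (h1 : ∀ a a' : α, ¬ H.Adj (Sum.inl a) (Sum.inl a'))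
    (h2 : ∀ b b' : β, ¬ H.Adj (Sum.inr b) (Sum.inr b')) :
    ∑ b : β, (H.neighborSet (Sum.inr b)).ncard = H.edgeSet.ncard := by
  classical
  haveI : DecidableRel H.Adj := Classical.decRel _
  have hdegr : ∀ b : β, (H.neighborSet (Sum.inr b)).ncard =
      (Finset.univ.filter fun a : α => H.Adj (Sum.inr b) (Sum.inl a)).card := by
    intro b
    rw [Set.ncard_eq_toFinset_card']
    refine (Finset.card_bij (fun a _ => Sum.inl a) ?_ ?_ ?_).symm
    · intro a ha
      simp only [Finset.mem_filter] at ha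
      simp [ha.2]
    · intro a _ a' _ h; simpa using h
    · rintro (a | b') hx
      · refine ⟨a, ?_, rfl⟩
        simp only [Set.mem_toFinset, mem_neighborSet] at hx
        simp [hx]
      · simp only [Set.mem_toFinset, mem_neighborSet] at hx
        exact absurd hx (h2 b b')
  have hdegl : ∀ a : α, (H.neighborSet (Sum.inl a)).ncard =
      (Finset.univ.filter fun b : β => H.Adj (Sum.inl a) (Sum.inr b)).card := by
    intro a
    rw [Set.ncard_eq_toFinset_card']
    refine (Finset.card_bij (fun b _ => Sum.inr b) ?_ ?_ ?_).symm
    · intro b hb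
      simp only [Finset.mem_filter] at hb
      simp [hb.2]
    · intro b _ b' _ h; simpa using h
    · rintro (a' | b) hx
      · simp only [Set.mem_toFinset, mem_neighborSet] at hx
        exact absurd hx (h1 a a')
      · refine ⟨b, ?_, rfl⟩
        simp only [Set.mem_toFinset, mem_neighborSet] at hx
        simp [hx]
  have hsame : ∑ a : α, (H.neighborSet (Sum.inl a)).ncard
      = ∑ b : β, (H.neighborSet (Sum.inr b)).ncard := by
    simp only [hdegl, hdegr, Finset.card_filter]
    rw [Finset.sum_comm]
    apply Finset.sum_congr rfl
    intro b _
    apply Finset.sum_congr rfl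
    intro a _
    simp [adj_comm]
  have hdeg : ∀ x : α ⊕ β, H.degree x = (H.neighborSet x).ncard := by
    intro x
    rw [← card_neighborFinset_eq_degree, neighborFinset, Set.ncard_eq_toFinset_card']
  have hh := H.sum_degrees_eq_twice_card_edges
  rw [Fintype.sum_sum_type] at hh
  simp only [hdeg] at hh
  rw [hsame] at hh
  have hE : H.edgeSet.ncard = H.edgeFinset.card := by
    rw [Set.ncard_eq_toFinset_card', edgeFinset]
  omega

/-- `∑_{e ∈ E'} f(e) ≤ μ(E')` for every nonempty `E' ⊆ E`. -/
theorem hypertree_sum_le_mu {V E : Type*} [Fintype V] [Fintype E] (r : V → E → Prop)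
    (hconn : (BipGraph r).Connected) (f : E → ℕ) (hf : IsHypertree r f)
    (E' : Finset E) (hne : E'.Nonempty) :
    ∑ e ∈ E', f e ≤ mu r (↑E' : Set E) := by
  classical
  obtain ⟨τ, ⟨hle, hconnτ, hacyc⟩, hdeg⟩ := hf
  set A : Set E := (↑E' : Set E) with hA
  set T := BipRestrict r τ A with hT
  set Gr := BipRestrict r (BipGraph r) A with hGr
  haveI : Fintype {v : V // ∃ e ∈ A, r v e} := Fintype.ofFinite _
  haveI : Fintype A := Fintype.ofFinite _
  -- injective hom from T to τ
  let Fm : ({v : V // ∃ e ∈ A, r v e} ⊕ A) → (V ⊕ E) :=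
    Sum.elim (fun v => Sum.inl v.1) (fun e => Sum.inr e.1)
  have Finj : Function.Injective Fm := by
    rintro (v | e) (v' | e') h <;> simp only [Fm, Sum.elim_inl, Sum.elim_inr, Sum.inl.injEq, Sum.inr.injEq,
      Sum.inl_ne_inr, Sum.inr_ne_inl] at h <;>
      simp only [Sum.inl.injEq, Sum.inr.injEq] <;> exact Subtype.ext h
  let F : T →g τ := ⟨Fm, fun h => h⟩
  -- T is acyclic
  have hTacyc : T.IsAcyclic := by
    intro v c hc
    exact hacyc (c.map F) (hc.map Finj)
  -- bipartite structure of T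
  have hb1 : ∀ a a' : {v : V // ∃ e ∈ A, r v e}, ¬ T.Adj (Sum.inl a) (Sum.inl a') := by
    intro a a' h
    have := hle h
    rcases this with ⟨v, e, hx, hy, _⟩ | ⟨v, e, hx, hy, _⟩ <;> simp_all
  have hb2 : ∀ b b' : A, ¬ T.Adj (Sum.inr b) (Sum.inr b') := by
    intro b b' h
    have := hle h
    rcases this with ⟨v, e, hx, hy, _⟩ | ⟨v, e, hx, hy, _⟩ <;> simp_all
  -- degrees in T
  have hdegT : ∀ e : A, (T.neighborSet (Sum.inr e)).ncard = f e.1 + 1 := by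
    intro e
    have himg : τ.neighborSet (Sum.inr e.1) = Fm '' (T.neighborSet (Sum.inr e)) := by
      ext y
      constructor
      · intro hy
        have hy' : τ.Adj (Sum.inr e.1) y := hy
        rcases hle hy' with ⟨v, e', hx, _, _⟩ | ⟨v, e', hx, hyy, hr⟩
        · simp at hx
        · have he' : e' = e.1 := by simpa using hx.symm
          subst he'
          refine ⟨Sum.inl ⟨v, ⟨e.1, e.2, hr⟩⟩, ?_, by simp [Fm, hyy]⟩
          show τ.Adj (Sum.inr e.1) (Sum.inl v)
          rwa [← hyy]
      · rintro ⟨x, hx, rfl⟩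
        exact hx
    rw [show (T.neighborSet (Sum.inr e)).ncard
        = (Fm '' (T.neighborSet (Sum.inr e))).ncard from
        (Set.ncard_image_of_injective _ Finj).symm, ← himg, hdeg e.1]
  -- T ≤ Gr
  have hTGr : T ≤ Gr := fun x y h => hle h
  -- component count
  have hsurj : Function.Surjective
      (ConnectedComponent.map (Hom.ofLE hTGr)) :=
    ConnectedComponent.ind fun x => ⟨T.connectedComponentMk x, by simp⟩
  haveI : Finite T.ConnectedComponent :=
    Finite.of_surjective _ (ConnectedComponent.ind (fun v => ⟨v, rfl⟩) :
      Function.Surjective T.connectedComponentMk)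
  have hcomp : Nat.card Gr.ConnectedComponent ≤ Nat.card T.ConnectedComponent :=
    Nat.card_le_card_of_surjective _ hsurj
  -- edge count of T
  have hsum : ∑ e : A, (T.neighborSet (Sum.inr e)).ncard = T.edgeSet.ncard :=
    bip_sum_degree T hb1 hb2
  have hforest := forest_card_bound (T.edgeSet.ncard) T rfl hTacyc
  rw [← hsum] at hforest
  simp only [hdegT] at hforest
  have hsumA : ∑ e : A, (f e.1 + 1) = ∑ e ∈ E', (f e + 1) := by
    rw [Finset.sum_set_coe (f := fun e => f e + 1), Finset.toFinset_coe]
  rw [hsumA] at hforest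
  rw [Fintype.card_sum] at hforest
  have hcA : Fintype.card A = E'.card := by
    rw [← Nat.card_eq_fintype_card, Nat.card_coe_set_eq, Set.ncard_coe_finset]
  rw [hcA] at hforest
  rw [Finset.sum_add_distrib, Finset.sum_const, smul_eq_mul, mul_one] at hforest
  have hV : Fintype.card {v : V // ∃ e ∈ A, r v e} = Nat.card {v : V // ∃ e ∈ A, r v e} :=
    (Nat.card_eq_fintype_card).symm
  rw [mu]
  rw [← hGr]
  apply Nat.le_sub_of_add_le
  omega
end

section
/- Let G be a connected bipartite graph with colour classes V and E, and let f be a hypertree of G. If A ⊆ E and B ⊆ E are both tight at f, then A ∩ B and A ∪ B are both tight at f. -/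
open SimpleGraph

variable {V E : Type*}

set_option linter.unusedSectionVars false
set_option maxHeartbeats 1000000

namespace TightAux

variable {W : Type*} [Fintype W]

/-- Number of connected components. -/
noncomputable def cc (H : SimpleGraph W) : ℕ := Nat.card H.ConnectedComponent

lemma cc_mono {H K : SimpleGraph W} (h : H ≤ K) : cc K ≤ cc H := by
  classical
  apply Nat.card_le_card_of_surjective
    (SimpleGraph.ConnectedComponent.map (SimpleGraph.Hom.ofLE h))
  intro c
  obtain ⟨v, rfl⟩ := c.exists_rep
  exact ⟨H.connectedComponentMk v, rfl⟩

lemma reachable_sup_edge {H : SimpleGraph W} {x y u v : W}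
    (h : (H ⊔ edge x y).Reachable u v) :
    H.Reachable u v ∨ (H.Reachable u x ∧ H.Reachable y v) ∨
      (H.Reachable u y ∧ H.Reachable x v) := by
  obtain ⟨w⟩ := h
  induction w with
  | nil => exact Or.inl (Reachable.refl _)
  | @cons a b c h w ih =>
    rcases h with h | h
    · have hab : H.Reachable a b := h.reachable
      rcases ih with h1 | ⟨h1, h2⟩ | ⟨h1, h2⟩
      · exact Or.inl (hab.trans h1)
      · exact Or.inr (Or.inl ⟨hab.trans h1, h2⟩)
      · exact Or.inr (Or.inr ⟨hab.trans h1, h2⟩)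
    · rw [edge_adj] at h
      obtain ⟨(⟨rfl, rfl⟩ | ⟨rfl, rfl⟩), hne⟩ := h
      · rcases ih with h1 | ⟨h1, h2⟩ | ⟨h1, h2⟩
        · exact Or.inr (Or.inl ⟨Reachable.refl _, h1⟩)
        · exact Or.inl (h1.symm.trans h2)
        · exact Or.inl h2
      · rcases ih with h1 | ⟨h1, h2⟩ | ⟨h1, h2⟩
        · exact Or.inr (Or.inr ⟨Reachable.refl _, h1⟩)
        · exact Or.inl h2
        · exact Or.inl (h1.symm.trans h2)

private lemma card_aux {α β : Type*} [Finite α] (φ : α → β) (hs : Function.Surjective φ)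
    (cx cy : α) (hne : cx ≠ cy) (heq : φ cx = φ cy)
    (hinj : ∀ a b, φ a = φ b → a = b ∨ (a = cx ∧ b = cy) ∨ (a = cy ∧ b = cx)) :
    Nat.card α = Nat.card β + 1 := by
  classical
  have hb : Finite β := Finite.of_surjective φ hs
  let g : α → β ⊕ Unit := fun a => if a = cy then Sum.inr () else Sum.inl (φ a)
  have hbij : Function.Bijective g := by
    constructor
    · intro a b hab
      by_cases ha : a = cy <;> by_cases hbb : b = cy
      · rw [ha, hbb]
      · simp only [g, if_pos ha, if_neg hbb] at hab
        exact absurd hab (by simp)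
      · simp only [g, if_neg ha, if_pos hbb] at hab
        exact absurd hab (by simp)
      · simp only [g, if_neg ha, if_neg hbb, Sum.inl.injEq] at hab
        rcases hinj a b hab with h | ⟨h1, h2⟩ | ⟨h1, h2⟩
        · exact h
        · exact absurd h2 hbb
        · exact absurd h1 ha
    · rintro (b | ⟨⟩)
      · obtain ⟨a, rfl⟩ := hs b
        by_cases ha : a = cy
        · refine ⟨cx, ?_⟩
          simp only [g, if_neg hne, ha, heq]
        · exact ⟨a, by simp [g, ha]⟩
      · exact ⟨cy, by simp [g]⟩
  calc Nat.card α = Nat.card (β ⊕ Unit) := Nat.card_congr (Equiv.ofBijective g hbij)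
    _ = Nat.card β + 1 := by simp [Nat.card_sum]

lemma cc_sup_edge_of_not_reachable {H : SimpleGraph W} {x y : W} (hne : x ≠ y)
    (hr : ¬ H.Reachable x y) : cc H = cc (H ⊔ edge x y) + 1 := by
  classical
  have hle : H ≤ H ⊔ edge x y := le_sup_left
  refine card_aux (SimpleGraph.ConnectedComponent.map (SimpleGraph.Hom.ofLE hle))
    ?_ (H.connectedComponentMk x) (H.connectedComponentMk y) ?_ ?_ ?_
  · intro c
    obtain ⟨v, rfl⟩ := c.exists_rep
    exact ⟨H.connectedComponentMk v, rfl⟩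
  · intro h
    exact hr (SimpleGraph.ConnectedComponent.eq.mp h)
  · exact SimpleGraph.ConnectedComponent.eq.mpr
      (Adj.reachable (by simp [edge_adj, hne]))
  · intro a b hab
    obtain ⟨u, rfl⟩ := a.exists_rep
    obtain ⟨v, rfl⟩ := b.exists_rep
    have : (H ⊔ edge x y).Reachable u v := by
      simpa using SimpleGraph.ConnectedComponent.eq.mp hab
    rcases reachable_sup_edge this with h1 | ⟨h1, h2⟩ | ⟨h1, h2⟩
    · exact Or.inl (SimpleGraph.ConnectedComponent.eq.mpr h1)
    · exact Or.inr (Or.inl ⟨SimpleGraph.ConnectedComponent.eq.mpr h1,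
        SimpleGraph.ConnectedComponent.eq.mpr h2.symm⟩)
    · exact Or.inr (Or.inr ⟨SimpleGraph.ConnectedComponent.eq.mpr h1,
        SimpleGraph.ConnectedComponent.eq.mpr h2.symm⟩)

lemma cc_sup_edge_of_reachable {H : SimpleGraph W} {x y : W}
    (hr : H.Reachable x y) : cc (H ⊔ edge x y) = cc H := by
  classical
  have hle : H ≤ H ⊔ edge x y := le_sup_left
  refine le_antisymm (cc_mono hle) ?_
  apply Nat.card_le_card_of_injective
    (SimpleGraph.ConnectedComponent.map (SimpleGraph.Hom.ofLE hle))
  intro a b hab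
  obtain ⟨u, rfl⟩ := a.exists_rep
  obtain ⟨v, rfl⟩ := b.exists_rep
  have : (H ⊔ edge x y).Reachable u v := by
    simpa using SimpleGraph.ConnectedComponent.eq.mp hab
  rcases reachable_sup_edge this with h1 | ⟨h1, h2⟩ | ⟨h1, h2⟩
  · exact SimpleGraph.ConnectedComponent.eq.mpr h1
  · exact SimpleGraph.ConnectedComponent.eq.mpr ((h1.trans hr).trans h2)
  · exact SimpleGraph.ConnectedComponent.eq.mpr ((h1.trans hr.symm).trans h2)

lemma cc_exchange {H' H : SimpleGraph W} (h : H' ≤ H) (x y : W) :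
    cc H + cc (H' ⊔ edge x y) ≤ cc H' + cc (H ⊔ edge x y) := by
  by_cases hxy : x = y
  · subst hxy
    rw [sup_edge_self, sup_edge_self]
    omega
  by_cases hr : H.Reachable x y
  · rw [cc_sup_edge_of_reachable hr]
    have := cc_mono (le_sup_left : H' ≤ H' ⊔ edge x y)
    omega
  · have h1 := cc_sup_edge_of_not_reachable hxy hr
    have h2 := cc_sup_edge_of_not_reachable hxy (fun hh => hr (hh.mono h))
    omega

lemma cc_key {H' H : SimpleGraph W} (h : H' ≤ H) (s : Finset (Sym2 W)) :
    cc H + cc (H' ⊔ fromEdgeSet ↑s) ≤ cc H' + cc (H ⊔ fromEdgeSet ↑s) := by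
  classical
  induction s using Finset.induction_on generalizing H' H with
  | empty =>
    simp only [Finset.coe_empty, fromEdgeSet_empty, sup_bot_eq]
    omega
  | @insert a s _ ih =>
    induction a using Sym2.ind with
    | _ x y =>
      have hrw : ∀ K : SimpleGraph W, K ⊔ fromEdgeSet ↑(insert s(x, y) s) =
          (K ⊔ fromEdgeSet ↑s) ⊔ edge x y := by
        intro K
        rw [Finset.coe_insert, Set.insert_eq, fromEdgeSet_union, edge]
        rw [sup_comm (fromEdgeSet {s(x, y)}) (fromEdgeSet ↑s), ← sup_assoc]
      rw [hrw, hrw]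
      have h1 := ih h
      have h2 := cc_exchange (sup_le_sup_right h (fromEdgeSet ↑s)) x y
      omega

lemma cc_submod (X Y : SimpleGraph W) : cc X + cc Y ≤ cc (X ⊓ Y) + cc (X ⊔ Y) := by
  classical
  have h := cc_key (inf_le_left : X ⊓ Y ≤ X) Y.edgeSet.toFinite.toFinset
  rw [Set.Finite.coe_toFinset, fromEdgeSet_edgeSet, sup_eq_right.mpr
    (inf_le_right : X ⊓ Y ≤ Y)] at h
  omega

lemma cc_bot : cc (⊥ : SimpleGraph W) = Fintype.card W := by
  rw [cc, ← Nat.card_eq_fintype_card]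
  refine Nat.card_congr (Equiv.ofBijective (⊥ : SimpleGraph W).connectedComponentMk
    ⟨?_, ?_⟩).symm
  · intro u v h
    exact reachable_bot.mp (SimpleGraph.ConnectedComponent.eq.mp h)
  · intro c
    obtain ⟨v, rfl⟩ := c.exists_rep
    exact ⟨v, rfl⟩

lemma isAcyclic_mono {H K : SimpleGraph W} (h : H ≤ K) (hK : K.IsAcyclic) : H.IsAcyclic := by
  intro v p hp
  exact hK (p.mapLe h) (hp.mapLe h)

lemma forest_card {H : SimpleGraph W} (hH : H.IsAcyclic) :
    Nat.card H.edgeSet + cc H = Fintype.card W := by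
  classical
  generalize hn : Nat.card H.edgeSet = n
  induction n using Nat.strong_induction_on generalizing H with
  | _ n ih =>
    by_cases he : H.edgeSet = ∅
    · have hbot : H = ⊥ := edgeSet_eq_empty.mp he
      subst hbot
      rw [cc_bot]
      simp [he] at hn
      omega
    · obtain ⟨e, heH⟩ := Set.nonempty_iff_ne_empty.mpr he
      induction e using Sym2.ind with
      | _ x y =>
        have hxy : H.Adj x y := (mem_edgeSet H).mp heH
        have hne : x ≠ y := hxy.ne
        have hbridge := (isAcyclic_iff_forall_adj_isBridge.mp hH) hxy
        rw [isBridge_iff] at hbridge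
        have hH'r : ¬ (H \ fromEdgeSet {s(x, y)}).Reachable x y := hbridge
        set H' : SimpleGraph W := H.deleteEdges {s(x, y)} with hH'def
        have hH'r2 : ¬ H'.Reachable x y := hH'r
        have hsup : H' ⊔ edge x y = H := by
          ext a b
          simp only [hH'def, sup_adj, deleteEdges_adj, fromEdgeSet_adj,
            Set.mem_singleton_iff, edge_adj]
          constructor
          · rintro (⟨h1, _⟩ | ⟨(⟨rfl, rfl⟩ | ⟨rfl, rfl⟩), _⟩)
            · exact h1
            · exact hxy
            · exact hxy.symm
          · intro hab
            by_cases hee : s(a, b) = s(x, y)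
            · refine Or.inr ⟨?_, hab.ne⟩
              rwa [Sym2.eq_iff] at hee
            · exact Or.inl ⟨hab, by simp [hee]⟩
        have hd : cc H' = cc H + 1 := by
          conv_rhs => rw [← hsup]
          exact cc_sup_edge_of_not_reachable hne hH'r2
        have hcard : Nat.card H'.edgeSet + 1 = n := by
          rw [← hn, Nat.card_coe_set_eq, Nat.card_coe_set_eq]
          have : H'.edgeSet = H.edgeSet \ {s(x, y)} := edgeSet_deleteEdges _
          rw [this]
          exact Set.ncard_diff_singleton_add_one heH (H.edgeSet.toFinite)
        have hH'a : H'.IsAcyclic := isAcyclic_mono (deleteEdges_le _) hH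
        have := ih (Nat.card H'.edgeSet) (by omega) hH'a rfl
        omega



section Bip

variable {V E : Type*} [Fintype V] [Fintype E]

/-- Restriction of a graph on `V ⊕ E` to edges touching `Sum.inr` of `S`. -/
def Restr (H : SimpleGraph (V ⊕ E)) (S : Set E) : SimpleGraph (V ⊕ E) where
  Adj x y := H.Adj x y ∧ ((∃ e ∈ S, x = Sum.inr e) ∨ (∃ e ∈ S, y = Sum.inr e))
  symm := by
    constructor
    rintro x y ⟨h, ht⟩
    exact ⟨h.symm, ht.symm⟩
  loopless := ⟨fun x h => H.irrefl h.1⟩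

lemma restr_le (H : SimpleGraph (V ⊕ E)) (S : Set E) : Restr H S ≤ H :=
  fun _ _ h => h.1

lemma restr_mono {H K : SimpleGraph (V ⊕ E)} (h : H ≤ K) (S : Set E) :
    Restr H S ≤ Restr K S := fun _ _ hx => ⟨h hx.1, hx.2⟩

variable {r : V → E → Prop}

lemma bip_adj_inr {e : E} {w : V ⊕ E} (h : (BipGraph r).Adj (Sum.inr e) w) :
    ∃ v, w = Sum.inl v ∧ r v e := by
  rcases h with ⟨v, e', hx, _, _⟩ | ⟨v, e', hx, hy, hr⟩
  · exact absurd hx (by simp)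
  · rw [Sum.inr.injEq] at hx
    subst hx
    exact ⟨v, hy, hr⟩

lemma restr_adj_struct {H : SimpleGraph (V ⊕ E)} (hle : H ≤ BipGraph r) {S : Set E}
    {x y : V ⊕ E} (h : (Restr H S).Adj x y) :
    ∃ v e, e ∈ S ∧ r v e ∧
      ((x = Sum.inl v ∧ y = Sum.inr e) ∨ (x = Sum.inr e ∧ y = Sum.inl v)) := by
  obtain ⟨hH, ht⟩ := h
  rcases hle hH with ⟨v, e, rfl, rfl, hr⟩ | ⟨v, e, rfl, rfl, hr⟩
  · refine ⟨v, e, ?_, hr, Or.inl ⟨rfl, rfl⟩⟩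
    rcases ht with ⟨e', he', h'⟩ | ⟨e', he', h'⟩
    · exact absurd h' (by simp)
    · rw [Sum.inr.injEq] at h'
      rwa [h']
  · refine ⟨v, e, ?_, hr, Or.inr ⟨rfl, rfl⟩⟩
    rcases ht with ⟨e', he', h'⟩ | ⟨e', he', h'⟩
    · rw [Sum.inr.injEq] at h'
      rwa [h']
    · exact absurd h' (by simp)

lemma restr_union (H : SimpleGraph (V ⊕ E)) (S T : Set E) :
    Restr H (S ∪ T) = Restr H S ⊔ Restr H T := by
  ext x y
  show (H.Adj x y ∧ _) ↔ (H.Adj x y ∧ _) ∨ (H.Adj x y ∧ _)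
  constructor
  · rintro ⟨h, (⟨e, (he | he), hx⟩ | ⟨e, (he | he), hx⟩)⟩
    · exact Or.inl ⟨h, Or.inl ⟨e, he, hx⟩⟩
    · exact Or.inr ⟨h, Or.inl ⟨e, he, hx⟩⟩
    · exact Or.inl ⟨h, Or.inr ⟨e, he, hx⟩⟩
    · exact Or.inr ⟨h, Or.inr ⟨e, he, hx⟩⟩
  · rintro (⟨h, (⟨e, he, hx⟩ | ⟨e, he, hx⟩)⟩ | ⟨h, (⟨e, he, hx⟩ | ⟨e, he, hx⟩)⟩)
    · exact ⟨h, Or.inl ⟨e, Or.inl he, hx⟩⟩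
    · exact ⟨h, Or.inr ⟨e, Or.inl he, hx⟩⟩
    · exact ⟨h, Or.inl ⟨e, Or.inr he, hx⟩⟩
    · exact ⟨h, Or.inr ⟨e, Or.inr he, hx⟩⟩

lemma restr_inter_le_inf (H : SimpleGraph (V ⊕ E)) (S T : Set E) :
    Restr H (S ∩ T) ≤ Restr H S ⊓ Restr H T := by
  rintro x y ⟨h, ht⟩
  constructor
  · refine ⟨h, ?_⟩
    rcases ht with ⟨e, he, hx⟩ | ⟨e, he, hx⟩
    · exact Or.inl ⟨e, he.1, hx⟩
    · exact Or.inr ⟨e, he.1, hx⟩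
  · refine ⟨h, ?_⟩
    rcases ht with ⟨e, he, hx⟩ | ⟨e, he, hx⟩
    · exact Or.inl ⟨e, he.2, hx⟩
    · exact Or.inr ⟨e, he.2, hx⟩

end Bip

section Count

variable {V E : Type*} [Fintype V] [Fintype E] {r : V → E → Prop}

/-- Inclusion of the restricted vertex type into `V ⊕ E`. -/
def bipIota (r : V → E → Prop) (S : Set E) : ({v : V // ∃ e ∈ S, r v e} ⊕ S) → V ⊕ E :=
  Sum.elim (fun v => Sum.inl v.1) (fun e => Sum.inr e.1)

lemma bipIota_injective (r : V → E → Prop) (S : Set E) :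
    Function.Injective (bipIota r S) := by
  rintro (a | a) (b | b) h <;>
    simp only [bipIota, Sum.elim_inl, Sum.elim_inr, Sum.inl.injEq, Sum.inr.injEq,
      reduceCtorEq] at h
  · rw [Sum.inl.injEq]; exact Subtype.ext h
  · rw [Sum.inr.injEq]; exact Subtype.ext h

lemma bipIota_inr_mem {S : Set E} {a : {v : V // ∃ e ∈ S, r v e} ⊕ S} {e : E}
    (h : bipIota r S a = Sum.inr e) : e ∈ S := by
  rcases a with v | e' <;>
    simp only [bipIota, Sum.elim_inl, Sum.elim_inr, Sum.inr.injEq, reduceCtorEq] at h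
  rw [← h]
  exact e'.2

lemma bipRestrict_adj_map {S : Set E} {a b : {v : V // ∃ e ∈ S, r v e} ⊕ S}
    (h : (BipRestrict r (BipGraph r) S).Adj a b) :
    (Restr (BipGraph r) S).Adj (bipIota r S a) (bipIota r S b) := by
  have h' : (BipGraph r).Adj (bipIota r S a) (bipIota r S b) := h
  refine ⟨h', ?_⟩
  rcases h' with ⟨v, e, hx, hy, hr⟩ | ⟨v, e, hx, hy, hr⟩
  · exact Or.inr ⟨e, bipIota_inr_mem hy, hy⟩
  · exact Or.inl ⟨e, bipIota_inr_mem hx, hx⟩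

lemma restr_adj_mem_range {S : Set E} {p q : V ⊕ E}
    (h : (Restr (BipGraph r) S).Adj p q) : p ∈ Set.range (bipIota r S) := by
  obtain ⟨v, e, heS, hr, (⟨hp, hq⟩ | ⟨hp, hq⟩)⟩ := restr_adj_struct le_rfl h
  · exact ⟨Sum.inl ⟨v, e, heS, hr⟩, hp.symm⟩
  · exact ⟨Sum.inr ⟨e, heS⟩, hp.symm⟩

lemma restr_walk_lift {S : Set E} : ∀ {p q : V ⊕ E} (_ : (Restr (BipGraph r) S).Walk p q)
    (a b : {v : V // ∃ e ∈ S, r v e} ⊕ S) (_ : bipIota r S a = p) (_ : bipIota r S b = q),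
    (BipRestrict r (BipGraph r) S).Reachable a b := by
  intro p q w
  induction w with
  | nil =>
    intro a b ha hb
    obtain rfl : a = b := bipIota_injective r S (ha.trans hb.symm)
    exact Reachable.refl _
  | @cons p p' q h w ih =>
    intro a b ha hb
    obtain ⟨a', ha'⟩ := restr_adj_mem_range h.symm
    refine Reachable.trans ?_ (ih a' b ha' hb)
    apply Adj.reachable
    show (BipGraph r).Adj (bipIota r S a) (bipIota r S a')
    rw [ha, ha']
    exact h.1

lemma restr_isolated {S : Set E} {w : V ⊕ E} (hw : w ∉ Set.range (bipIota r S)) {q : V ⊕ E}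
    (h : (Restr (BipGraph r) S).Reachable w q) : w = q := by
  obtain ⟨walk⟩ := h
  cases walk with
  | nil => rfl
  | cons h _ => exact absurd (restr_adj_mem_range h) hw

lemma cc_restr_eq (r : V → E → Prop) (S : Set E) :
    cc (Restr (BipGraph r) S) + Nat.card {v : V // ∃ e ∈ S, r v e} + Nat.card S =
      Nat.card (BipRestrict r (BipGraph r) S).ConnectedComponent + Fintype.card (V ⊕ E) := by
  classical
  let Φ : (BipRestrict r (BipGraph r) S).ConnectedComponent ⊕
      {w : V ⊕ E // w ∉ Set.range (bipIota r S)} → (Restr (BipGraph r) S).ConnectedComponent :=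
    Sum.elim (ConnectedComponent.map ⟨bipIota r S, fun h => bipRestrict_adj_map h⟩)
      (fun w => (Restr (BipGraph r) S).connectedComponentMk w.1)
  have hsurj : Function.Surjective Φ := by
    intro c
    obtain ⟨p, rfl⟩ := c.exists_rep
    by_cases hp : p ∈ Set.range (bipIota r S)
    · obtain ⟨a, rfl⟩ := hp
      exact ⟨Sum.inl ((BipRestrict r (BipGraph r) S).connectedComponentMk a), rfl⟩
    · exact ⟨Sum.inr ⟨p, hp⟩, rfl⟩
  have hinj : Function.Injective Φ := by
    rintro (a | ⟨w, hw⟩) (b | ⟨w', hw'⟩) hab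
    · obtain ⟨u, rfl⟩ := a.exists_rep
      obtain ⟨v, rfl⟩ := b.exists_rep
      simp only [Φ, Sum.elim_inl, ConnectedComponent.map_mk] at hab
      obtain ⟨walk⟩ := ConnectedComponent.eq.mp hab
      exact congrArg Sum.inl (ConnectedComponent.eq.mpr (restr_walk_lift walk u v rfl rfl))
    · obtain ⟨u, rfl⟩ := a.exists_rep
      simp only [Φ, Sum.elim_inl, Sum.elim_inr, ConnectedComponent.map_mk] at hab
      have h1 := restr_isolated hw' (ConnectedComponent.eq.mp hab).symm
      exact absurd ⟨u, h1.symm⟩ hw'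
    · obtain ⟨u, rfl⟩ := b.exists_rep
      simp only [Φ, Sum.elim_inl, Sum.elim_inr, ConnectedComponent.map_mk] at hab
      have h1 := restr_isolated hw (ConnectedComponent.eq.mp hab)
      exact absurd ⟨u, h1.symm⟩ hw
    · simp only [Φ, Sum.elim_inr] at hab
      have h1 := restr_isolated hw (ConnectedComponent.eq.mp hab)
      exact congrArg Sum.inr (Subtype.ext h1)
  have hcard := Nat.card_congr (Equiv.ofBijective Φ ⟨hinj, hsurj⟩)
  rw [Nat.card_sum] at hcard
  have hrange : Nat.card (Set.range (bipIota r S)) =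
      Nat.card {v : V // ∃ e ∈ S, r v e} + Nat.card S := by
    rw [← Nat.card_congr (Equiv.ofInjective _ (bipIota_injective r S)), Nat.card_sum]
  have hcompl : Nat.card (Set.range (bipIota r S)) +
      Nat.card {w : V ⊕ E // w ∉ Set.range (bipIota r S)} = Fintype.card (V ⊕ E) := by
    have h3 : Nat.card {w : V ⊕ E // w ∉ Set.range (bipIota r S)} =
        Nat.card ↥(Set.range (bipIota r S))ᶜ :=
      Nat.card_congr (Equiv.subtypeEquivRight (fun w => (Set.mem_compl_iff _ _).symm))
    rw [h3, Nat.card_coe_set_eq, Nat.card_coe_set_eq, ← Nat.card_eq_fintype_card]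
    exact Set.ncard_add_ncard_compl _
  show Nat.card (Restr (BipGraph r) S).ConnectedComponent + _ + _ = _
  omega

lemma card_cc_le (hv : ∀ e : E, ∃ v, r v e) (S : Set E) :
    Nat.card (BipRestrict r (BipGraph r) S).ConnectedComponent ≤
      Nat.card {v : V // ∃ e ∈ S, r v e} := by
  classical
  apply Nat.card_le_card_of_surjective
    (fun v : {v : V // ∃ e ∈ S, r v e} =>
      (BipRestrict r (BipGraph r) S).connectedComponentMk (Sum.inl v))
  intro c
  obtain ⟨a, rfl⟩ := c.exists_rep
  rcases a with v | e
  · exact ⟨v, rfl⟩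
  · obtain ⟨v, hr⟩ := hv e.1
    refine ⟨⟨v, e.1, e.2, hr⟩, ?_⟩
    apply ConnectedComponent.eq.mpr
    apply Adj.reachable
    show (BipGraph r).Adj (Sum.inl v) (Sum.inr e.1)
    exact Or.inl ⟨v, e.1, rfl, rfl, hr⟩

lemma restr_edge_count [DecidableEq E] {τ : SimpleGraph (V ⊕ E)} (hle : τ ≤ BipGraph r)
    {f : E → ℕ} (hdeg : ∀ e, (τ.neighborSet (Sum.inr e)).ncard = f e + 1) (A : Finset E) :
    Nat.card (Restr τ (↑A : Set E)).edgeSet = ∑ e ∈ A, (f e + 1) := by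
  classical
  let T := Σ e : {e : E // e ∈ A}, {w : V ⊕ E // w ∈ τ.neighborSet (Sum.inr e.1)}
  let g : T → (Restr τ (↑A : Set E)).edgeSet := fun p =>
    ⟨s(p.2.1, Sum.inr p.1.1), by
      rw [mem_edgeSet]
      exact ⟨(p.2.2 : τ.Adj (Sum.inr p.1.1) p.2.1).symm,
        Or.inr ⟨p.1.1, p.1.2, rfl⟩⟩⟩
  have hginj : Function.Injective g := by
    rintro ⟨⟨e, he⟩, ⟨w, hw⟩⟩ ⟨⟨e2, he2⟩, ⟨w2, hw2⟩⟩ hg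
    simp only [g, Subtype.mk.injEq, Sym2.eq_iff] at hg
    rcases hg with ⟨rfl, hee⟩ | ⟨h1, h2⟩
    · rw [Sum.inr.injEq] at hee
      subst hee
      rfl
    · obtain ⟨v, hv, _⟩ := bip_adj_inr (hle hw)
      rw [h1] at hv
      exact absurd hv (by simp)
  have hgsurj : Function.Surjective g := by
    rintro ⟨q, hq⟩
    induction q using Sym2.ind with
    | _ a b =>
      rw [mem_edgeSet] at hq
      obtain ⟨hτ, ht⟩ := hq
      rcases ht with ⟨e, he, rfl⟩ | ⟨e, he, rfl⟩
      · exact ⟨⟨⟨e, he⟩, ⟨b, hτ⟩⟩, Subtype.ext Sym2.eq_swap⟩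
      · exact ⟨⟨⟨e, he⟩, ⟨a, hτ.symm⟩⟩, rfl⟩
  have hT : Nat.card T = ∑ e ∈ A, (f e + 1) := by
    rw [Nat.card_eq_fintype_card, Fintype.card_sigma]
    have h1 : ∀ e : {e : E // e ∈ A},
        Fintype.card {w : V ⊕ E // w ∈ τ.neighborSet (Sum.inr e.1)} = f e.1 + 1 := by
      intro e
      rw [← Nat.card_eq_fintype_card, Nat.card_coe_set_eq]
      exact hdeg e.1
    rw [Finset.sum_congr rfl (fun e _ => h1 e)]
    exact Finset.sum_coe_sort A (fun e => f e + 1)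
  rw [← hT]
  exact Nat.card_congr (Equiv.ofBijective g ⟨hginj, hgsurj⟩).symm

end Count


end TightAux
/-- tight sets are closed under intersection and union. -/
theorem tight_inter_union {V E : Type*} [Fintype V] [Fintype E] [DecidableEq E]
    (r : V → E → Prop) (hconn : (BipGraph r).Connected) (f : E → ℕ) (hf : IsHypertree r f)
    (A B : Finset E) (hA : Tight r f A) (hB : Tight r f B) :
    Tight r f (A ∩ B) ∧ Tight r f (A ∪ B) := by
  classical
  open TightAux in
  obtain ⟨τ, ⟨hτle, hτconn, hτacyc⟩, hdeg⟩ := hf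
  set N := Fintype.card (V ⊕ E) with hN
  have hv : ∀ e : E, ∃ v, r v e := by
    intro e
    have h1 : (τ.neighborSet (Sum.inr e)).ncard = f e + 1 := hdeg e
    have h2 : (τ.neighborSet (Sum.inr e)).Nonempty := by
      apply Set.nonempty_of_ncard_ne_zero
      omega
    obtain ⟨w, hw⟩ := h2
    obtain ⟨v, rfl, hr⟩ := TightAux.bip_adj_inr (hτle hw)
    exact ⟨v, hr⟩
  have hF1 : ∀ C : Finset E,
      cc (Restr (BipGraph r) (↑C : Set E)) + Nat.card {v : V // ∃ e ∈ (↑C : Set E), r v e}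
        + C.card = Nat.card (BipRestrict r (BipGraph r) (↑C : Set E)).ConnectedComponent
        + N := by
    intro C
    have h := cc_restr_eq r (↑C : Set E)
    rwa [Nat.card_coe_set_eq, Set.ncard_coe_finset] at h
  have hF2 : ∀ C : Finset E,
      Nat.card (BipRestrict r (BipGraph r) (↑C : Set E)).ConnectedComponent ≤
        Nat.card {v : V // ∃ e ∈ (↑C : Set E), r v e} :=
    fun C => card_cc_le hv _
  have hF3 : ∀ C : Finset E,
      (∑ e ∈ C, f e) + C.card + cc (Restr τ (↑C : Set E)) = N := by
    intro C
    have hacyc' : (Restr τ (↑C : Set E)).IsAcyclic :=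
      isAcyclic_mono (restr_le τ _) hτacyc
    have h := forest_card hacyc'
    rw [restr_edge_count hτle hdeg C] at h
    rw [Finset.sum_add_distrib, Finset.sum_const, smul_eq_mul, mul_one] at h
    omega
  have hF4 : ∀ C : Finset E,
      cc (Restr (BipGraph r) (↑C : Set E)) ≤ cc (Restr τ (↑C : Set E)) :=
    fun C => cc_mono (restr_mono hτle _)
  have hle_mu : ∀ C : Finset E,
      (∑ e ∈ C, f e) + Nat.card (BipRestrict r (BipGraph r) (↑C : Set E)).ConnectedComponent ≤
        Nat.card {v : V // ∃ e ∈ (↑C : Set E), r v e} := by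
    intro C
    have h1 := hF1 C
    have h3 := hF3 C
    have h4 := hF4 C
    omega
  -- submodularity of the component counts
  have hsub : cc (Restr (BipGraph r) (↑A : Set E)) + cc (Restr (BipGraph r) (↑B : Set E)) ≤
      cc (Restr (BipGraph r) (↑(A ∩ B) : Set E)) +
        cc (Restr (BipGraph r) (↑(A ∪ B) : Set E)) := by
    have h1 := cc_submod (Restr (BipGraph r) (↑A : Set E)) (Restr (BipGraph r) (↑B : Set E))
    have h2 : cc (Restr (BipGraph r) (↑A : Set E) ⊓ Restr (BipGraph r) (↑B : Set E)) ≤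
        cc (Restr (BipGraph r) ((↑A : Set E) ∩ (↑B : Set E))) :=
      cc_mono (restr_inter_le_inf _ _ _)
    have h3 : Restr (BipGraph r) (↑A : Set E) ⊔ Restr (BipGraph r) (↑B : Set E) =
        Restr (BipGraph r) ((↑A : Set E) ∪ (↑B : Set E)) := (restr_union _ _ _).symm
    rw [h3] at h1
    rw [Finset.coe_inter, Finset.coe_union]
    omega
  -- submodularity of the vertex counts
  have hn : Nat.card {v : V // ∃ e ∈ (↑(A ∪ B) : Set E), r v e} +
      Nat.card {v : V // ∃ e ∈ (↑(A ∩ B) : Set E), r v e} ≤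
      Nat.card {v : V // ∃ e ∈ (↑A : Set E), r v e} +
        Nat.card {v : V // ∃ e ∈ (↑B : Set E), r v e} := by
    have hPU : {v : V | ∃ e ∈ (↑(A ∪ B) : Set E), r v e} =
        {v : V | ∃ e ∈ (↑A : Set E), r v e} ∪ {v : V | ∃ e ∈ (↑B : Set E), r v e} := by
      ext v
      simp only [Set.mem_setOf_eq, Set.mem_union, Finset.coe_union, Finset.mem_coe,
        Finset.mem_union]
      constructor
      · rintro ⟨e, (he | he), hr⟩
        · exact Or.inl ⟨e, he, hr⟩
        · exact Or.inr ⟨e, he, hr⟩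
      · rintro (⟨e, he, hr⟩ | ⟨e, he, hr⟩)
        · exact ⟨e, Or.inl he, hr⟩
        · exact ⟨e, Or.inr he, hr⟩
    have hPI : {v : V | ∃ e ∈ (↑(A ∩ B) : Set E), r v e} ⊆
        {v : V | ∃ e ∈ (↑A : Set E), r v e} ∩ {v : V | ∃ e ∈ (↑B : Set E), r v e} := by
      rintro v ⟨e, he, hr⟩
      rw [Finset.mem_coe, Finset.mem_inter] at he
      exact ⟨⟨e, he.1, hr⟩, ⟨e, he.2, hr⟩⟩
    have hcard := Set.ncard_union_add_ncard_inter
      {v : V | ∃ e ∈ (↑A : Set E), r v e} {v : V | ∃ e ∈ (↑B : Set E), r v e}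
      (Set.toFinite _) (Set.toFinite _)
    have hIle : ({v : V | ∃ e ∈ (↑(A ∩ B) : Set E), r v e}).ncard ≤
        ({v : V | ∃ e ∈ (↑A : Set E), r v e} ∩ {v : V | ∃ e ∈ (↑B : Set E), r v e}).ncard :=
      Set.ncard_le_ncard hPI (Set.toFinite _)
    have e1 : Nat.card {v : V // ∃ e ∈ (↑(A ∪ B) : Set E), r v e} =
        ({v : V | ∃ e ∈ (↑(A ∪ B) : Set E), r v e}).ncard := Nat.card_coe_set_eq _
    have e2 : Nat.card {v : V // ∃ e ∈ (↑(A ∩ B) : Set E), r v e} =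
        ({v : V | ∃ e ∈ (↑(A ∩ B) : Set E), r v e}).ncard := Nat.card_coe_set_eq _
    have e3 : Nat.card {v : V // ∃ e ∈ (↑A : Set E), r v e} =
        ({v : V | ∃ e ∈ (↑A : Set E), r v e}).ncard := Nat.card_coe_set_eq _
    have e4 : Nat.card {v : V // ∃ e ∈ (↑B : Set E), r v e} =
        ({v : V | ∃ e ∈ (↑B : Set E), r v e}).ncard := Nat.card_coe_set_eq _
    rw [e1, e2, e3, e4, hPU]
    omega
  have hcards : (A ∪ B).card + (A ∩ B).card = A.card + B.card :=
    Finset.card_union_add_card_inter A B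
  have hsums : (∑ e ∈ A ∪ B, f e) + (∑ e ∈ A ∩ B, f e) =
      (∑ e ∈ A, f e) + (∑ e ∈ B, f e) := Finset.sum_union_inter
  unfold Tight mu at hA hB ⊢
  have h1A := hF1 A; have h1B := hF1 B; have h1U := hF1 (A ∪ B); have h1I := hF1 (A ∩ B)
  have h2A := hF2 A; have h2B := hF2 B; have h2U := hF2 (A ∪ B); have h2I := hF2 (A ∩ B)
  have h7U := hle_mu (A ∪ B); have h7I := hle_mu (A ∩ B)
  constructor
  · omega
  · omega
end

section
/- Let G be a connected bipartite graph with colour classes V and E, f a hypertree of G, and e₁, e₂, e₃ ∈ E. If the function obtained from f by decreasing f(e₁) by 1 and increasing f(e₂) by 1 is a hypertree, and the function obtained from f by decreasing f(e₂) by 1 and increasing f(e₃) by 1 is a hypertree, then the function obtained from f by decreasing f(e₁) by 1 and increasing f(e₃) by 1 is a hypertree. -/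
open SimpleGraph

variable {V E : Type*}

/-! ### Auxiliary development for `transfer_trans` -/

namespace TransferTransAux

open SimpleGraph

open scoped Classical

/-- E-side degree of a graph on `V ⊕ E`. -/
noncomputable def degE {V E : Type*} (T : SimpleGraph (V ⊕ E)) (e : E) : ℕ :=
  (T.neighborSet (Sum.inr e)).ncard

lemma reach_del {α : Type*} {G : SimpleGraph α} {u v : α} :
    ∀ {w t : α}, G.Walk w t →
      (G.deleteEdges {s(u, v)}).Reachable w t ∨
      (G.deleteEdges {s(u, v)}).Reachable w u ∨
      (G.deleteEdges {s(u, v)}).Reachable w v := by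
  intro w t p
  induction p with
  | nil => exact Or.inl (Reachable.refl _)
  | @cons w x t h q ih =>
    by_cases hs : s(w, x) = s(u, v)
    · rcases Sym2.eq_iff.mp hs with ⟨rfl, rfl⟩ | ⟨rfl, rfl⟩
      · exact Or.inr (Or.inl (Reachable.refl _))
      · exact Or.inr (Or.inr (Reachable.refl _))
    · have hadj : (G.deleteEdges {s(u, v)}).Adj w x :=
        SimpleGraph.deleteEdges_adj.mpr ⟨h, by simpa using hs⟩
      rcases ih with h' | h' | h'
      · exact Or.inl (hadj.reachable.trans h')
      · exact Or.inr (Or.inl (hadj.reachable.trans h'))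
      · exact Or.inr (Or.inr (hadj.reachable.trans h'))

lemma total_del {α : Type*} {G : SimpleGraph α} {u v : α} (hG : G.Connected) (w : α) :
    (G.deleteEdges {s(u, v)}).Reachable w u ∨ (G.deleteEdges {s(u, v)}).Reachable w v := by
  obtain ⟨p⟩ := hG.preconnected w u
  rcases reach_del (u := u) (v := v) p with h | h | h
  · exact Or.inl h
  · exact Or.inl h
  · exact Or.inr h

lemma exists_cross {α : Type*} {D T' : SimpleGraph α} {u v : α}
    (hsep : ¬ D.Reachable u v) :
    ∀ {x y : α}, T'.Walk x y → (∀ w, D.Reachable w u ∨ D.Reachable w v) →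
      D.Reachable x u → D.Reachable y v →
      ∃ p q, T'.Adj p q ∧ D.Reachable p u ∧ D.Reachable q v := by
  intro x y w
  induction w with
  | nil =>
    intro _ h1 h2
    exact absurd (h1.symm.trans h2) hsep
  | @cons x x' y h q ih =>
    intro htot h1 h2
    rcases htot x' with h' | h'
    · exact ih htot h' h2
    · exact ⟨x, x', h, h1, h'⟩

lemma bip_shape {V E : Type*} {r : V → E → Prop} {T : SimpleGraph (V ⊕ E)}
    (hT : T ≤ BipGraph r) {x y : V ⊕ E} (h : T.Adj x y) :
    ∃ (a : V) (b : E), (x = Sum.inl a ∧ y = Sum.inr b) ∨ (x = Sum.inr b ∧ y = Sum.inl a) := by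
  rcases hT h with ⟨a, b, hx, hy, _⟩ | ⟨a, b, hx, hy, _⟩
  · exact ⟨a, b, Or.inl ⟨hx, hy⟩⟩
  · exact ⟨a, b, Or.inr ⟨hx, hy⟩⟩

lemma step {V E : Type*} [Fintype V] [Fintype E] {r : V → E → Prop}
    {T T' : SimpleGraph (V ⊕ E)} (hT : IsSpanningTree (BipGraph r) T)
    (hT' : IsSpanningTree (BipGraph r) T') {e : E} (he : degE T' e < degE T e) :
    ∃ (T₁ : SimpleGraph (V ⊕ E)) (e'' : E), IsSpanningTree (BipGraph r) T₁ ∧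
      (T₁.edgeSet \ T'.edgeSet).ncard + 1 ≤ (T.edgeSet \ T'.edgeSet).ncard ∧
      ((e'' = e ∧ ∀ x, degE T₁ x = degE T x) ∨
       (e'' ≠ e ∧ ∀ x : E, degE T₁ x =
          if x = e then degE T e - 1 else if x = e'' then degE T x + 1 else degE T x)) := by
  obtain ⟨hTG, hTc, hTa⟩ := hT
  obtain ⟨hT'G, hT'c, hT'a⟩ := hT'
  -- Find an edge `a = s(inr e, inl v₀)` of `T` that is not an edge of `T'`.
  have hsub : ¬ (T.neighborSet (Sum.inr e) ⊆ T'.neighborSet (Sum.inr e)) := by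
    intro hss
    exact absurd (Set.ncard_le_ncard hss (Set.toFinite _)) (not_le.mpr he)
  obtain ⟨u₀, hu₀T, hu₀T'⟩ := Set.not_subset.mp hsub
  obtain ⟨v₀, rfl⟩ : ∃ v₀, u₀ = Sum.inl v₀ := by
    rcases bip_shape hTG hu₀T with ⟨a', b', ⟨hx, hy⟩ | ⟨hx, hy⟩⟩
    · exact absurd hx (by simp)
    · exact ⟨a', hy⟩
  have haT : T.Adj (Sum.inr e) (Sum.inl v₀) := hu₀T
  have haT' : ¬ T'.Adj (Sum.inr e) (Sum.inl v₀) := hu₀T'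
  set a : Sym2 (V ⊕ E) := s(Sum.inr e, Sum.inl v₀) with ha_def
  set D : SimpleGraph (V ⊕ E) := T.deleteEdges {a} with hD_def
  have hbr : ¬ D.Reachable (Sum.inr e) (Sum.inl v₀) :=
    ((isAcyclic_iff_forall_adj_isBridge.mp hTa) haT)
  have htot : ∀ w, D.Reachable w (Sum.inr e) ∨ D.Reachable w (Sum.inl v₀) :=
    fun w => total_del hTc w
  obtain ⟨pw⟩ := hT'c.preconnected (Sum.inr e) (Sum.inl v₀)
  obtain ⟨p, q, hpq, hpu, hqv⟩ :=
    exists_cross hbr pw htot (Reachable.refl _) (Reachable.refl _)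
  -- `b = s(p, q)` is an edge of `T'` that is not an edge of `T`.
  have hnadjT : ¬ T.Adj p q := by
    intro hTpq
    by_cases hba : s(p, q) = a
    · rcases Sym2.eq_iff.mp hba with ⟨hp, hq⟩ | ⟨hp, hq⟩
      · subst hp; subst hq; exact haT' hpq
      · subst hp; exact hbr hpu.symm
    · have hD : D.Adj p q := SimpleGraph.deleteEdges_adj.mpr ⟨hTpq, by simpa using hba⟩
      exact hbr ((hpu.symm.trans hD.reachable).trans hqv)
  have hqp_ne : p ≠ q := hpq.ne
  set b : Sym2 (V ⊕ E) := s(p, q) with hb_def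
  set T₁ : SimpleGraph (V ⊕ E) := D ⊔ SimpleGraph.fromEdgeSet {b} with hT₁_def
  have hT₁_adj : ∀ x y : V ⊕ E,
      T₁.Adj x y ↔ ((T.Adj x y ∧ s(x, y) ≠ a) ∨ (s(x, y) = b ∧ x ≠ y)) := by
    intro x y
    rw [hT₁_def, hD_def]
    simp [SimpleGraph.sup_adj, SimpleGraph.deleteEdges_adj, SimpleGraph.fromEdgeSet_adj]
  have hT₁G : T₁ ≤ BipGraph r := by
    intro x y hxy
    rcases (hT₁_adj x y).mp hxy with ⟨h, _⟩ | ⟨h, hne⟩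
    · exact hTG h
    · rw [hb_def] at h
      rcases Sym2.eq_iff.mp h with ⟨rfl, rfl⟩ | ⟨rfl, rfl⟩
      · exact hT'G hpq
      · exact hT'G hpq.symm
  have hDT₁ : D ≤ T₁ := le_sup_left
  have hbT₁ : T₁.Adj p q := (hT₁_adj p q).mpr (Or.inr ⟨rfl, hqp_ne⟩)
  have hreach : ∀ w, T₁.Reachable w (Sum.inr e) := by
    intro w
    have hqp : T₁.Reachable (Sum.inl v₀) (Sum.inr e) :=
      ((hqv.mono hDT₁).symm.trans hbT₁.symm.reachable).trans (hpu.mono hDT₁)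
    rcases htot w with h | h
    · exact h.mono hDT₁
    · exact (h.mono hDT₁).trans hqp
  have hT₁c : T₁.Connected := by
    haveI : Nonempty (V ⊕ E) := hTc.nonempty
    exact SimpleGraph.Connected.mk (fun x y => (hreach x).trans (hreach y).symm)
  have hDle : D ≤ T := by rw [hD_def]; exact SimpleGraph.deleteEdges_le _
  have hDa : D.IsAcyclic := fun w c hc => hTa (c.mapLe hDle) (hc.mapLe _)
  have hnreach_pq : ¬ D.Reachable p q :=
    fun hr => hbr ((hpu.symm.trans hr).trans hqv)
  have hT₁a : T₁.IsAcyclic := by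
    intro w c hc
    by_cases hbc : s(p, q) ∈ c.edges
    · have h2 := (SimpleGraph.adj_and_reachable_delete_edges_iff_exists_cycle.mpr
        ⟨w, c, hc, hbc⟩).2
      have hle : T₁ \ SimpleGraph.fromEdgeSet {s(p, q)} ≤ D := by
        intro x y hxy
        rw [SimpleGraph.sdiff_adj] at hxy
        obtain ⟨hxy1, hxy2⟩ := hxy
        rcases (hT₁_adj x y).mp hxy1 with ⟨h1, h2'⟩ | ⟨h1, h2'⟩
        · rw [hD_def]
          exact SimpleGraph.deleteEdges_adj.mpr ⟨h1, by simpa using h2'⟩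
        · have hmem : s(x, y) ∈ ({s(p, q)} : Set (Sym2 (V ⊕ E))) := by
            rw [← hb_def]; exact h1
          exact absurd ((SimpleGraph.fromEdgeSet_adj _).mpr ⟨hmem, h2'⟩) hxy2
      exact hnreach_pq (h2.mono hle)
    · have hsubc : ∀ ed ∈ c.edges, ed ∈ D.edgeSet := by
        intro ed hed
        have h1 : ed ∈ T₁.edgeSet := c.edges_subset_edgeSet hed
        rw [hT₁_def, SimpleGraph.edgeSet_sup] at h1
        rcases h1 with h1 | h1
        · exact h1
        · rw [SimpleGraph.edgeSet_fromEdgeSet] at h1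
          obtain ⟨h1, -⟩ := h1
          rw [Set.mem_singleton_iff] at h1
          subst h1
          rw [hb_def] at hed
          exact absurd hed hbc
      exact hDa (c.transfer D hsubc) (hc.transfer hsubc)
  have hT₁sp : IsSpanningTree (BipGraph r) T₁ := ⟨hT₁G, hT₁c, hT₁a⟩
  -- the edge `b` has endpoints `inl v₁`, `inr e₁'`
  obtain ⟨v₁, e₁', hshape⟩ := bip_shape hT'G hpq
  have hb' : b = s(Sum.inl v₁, Sum.inr e₁') := by
    rcases hshape with ⟨rfl, rfl⟩ | ⟨rfl, rfl⟩
    · rw [hb_def]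
    · rw [hb_def]; exact Sym2.eq_swap
  have hnadj' : ¬ T.Adj (Sum.inr e₁') (Sum.inl v₁) := by
    intro h
    apply hnadjT
    rcases hshape with ⟨rfl, rfl⟩ | ⟨rfl, rfl⟩
    · exact h.symm
    · exact h
  -- adjacency of `T₁` from an `inr` vertex
  have hadjT₁ : ∀ (x : E) (y : V ⊕ E),
      T₁.Adj (Sum.inr x) y ↔
        ((T.Adj (Sum.inr x) y ∧ ¬(x = e ∧ y = Sum.inl v₀)) ∨ (x = e₁' ∧ y = Sum.inl v₁)) := by
    intro x y
    rw [hT₁_adj]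
    constructor
    · rintro (⟨h1, h2⟩ | ⟨h1, h2⟩)
      · refine Or.inl ⟨h1, ?_⟩
        rintro ⟨rfl, rfl⟩
        exact h2 (by rw [ha_def])
      · right
        rw [hb', Sym2.eq_iff] at h1
        rcases h1 with ⟨hx, hy⟩ | ⟨hx, hy⟩
        · exact absurd hx (by simp)
        · exact ⟨Sum.inr.inj hx, hy⟩
    · rintro (⟨h1, h2⟩ | ⟨rfl, rfl⟩)
      · refine Or.inl ⟨h1, fun hs => ?_⟩
        rw [ha_def, Sym2.eq_iff] at hs
        rcases hs with ⟨hx, hy⟩ | ⟨hx, hy⟩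
        · exact h2 ⟨Sum.inr.inj hx, hy⟩
        · exact absurd hx (by simp)
      · exact Or.inr ⟨by rw [hb']; exact Sym2.eq_swap, by simp⟩
  -- neighbor set computations
  have hNe_other : ∀ x : E, x ≠ e → x ≠ e₁' →
      T₁.neighborSet (Sum.inr x) = T.neighborSet (Sum.inr x) := by
    intro x hx1 hx2
    ext y
    constructor
    · intro h
      rcases (hadjT₁ x y).mp h with ⟨h, -⟩ | ⟨h, -⟩
      · exact h
      · exact absurd h hx2
    · intro h
      exact (hadjT₁ x y).mpr (Or.inl ⟨h, fun hc => hx1 hc.1⟩)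
  have hNe_e : e ≠ e₁' →
      T₁.neighborSet (Sum.inr e) = T.neighborSet (Sum.inr e) \ {Sum.inl v₀} := by
    intro hee
    ext y
    constructor
    · intro h
      rcases (hadjT₁ e y).mp h with ⟨h1, h2⟩ | ⟨h1, -⟩
      · exact ⟨h1, fun hc => h2 ⟨rfl, hc⟩⟩
      · exact absurd h1 (Ne.symm (fun hc => hee hc.symm))
    · rintro ⟨h1, h2⟩
      exact (hadjT₁ e y).mpr (Or.inl ⟨h1, fun hc => h2 hc.2⟩)
  have hNe_e' : e₁' ≠ e →
      T₁.neighborSet (Sum.inr e₁') = insert (Sum.inl v₁) (T.neighborSet (Sum.inr e₁')) := by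
    intro hee
    ext y
    constructor
    · intro h
      rcases (hadjT₁ e₁' y).mp h with ⟨h1, -⟩ | ⟨-, h2⟩
      · exact Set.mem_insert_iff.mpr (Or.inr h1)
      · exact Set.mem_insert_iff.mpr (Or.inl h2)
    · intro h
      rcases Set.mem_insert_iff.mp h with rfl | h
      · exact (hadjT₁ e₁' (Sum.inl v₁)).mpr (Or.inr ⟨rfl, rfl⟩)
      · exact (hadjT₁ e₁' y).mpr (Or.inl ⟨h, fun hc => hee hc.1⟩)
  have hNe_same : e₁' = e →
      T₁.neighborSet (Sum.inr e) =
        insert (Sum.inl v₁) (T.neighborSet (Sum.inr e) \ {Sum.inl v₀}) := by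
    intro hee
    ext y
    constructor
    · intro h
      rcases (hadjT₁ e y).mp h with ⟨h1, h2⟩ | ⟨-, h2⟩
      · exact Set.mem_insert_iff.mpr (Or.inr ⟨h1, fun hc => h2 ⟨rfl, hc⟩⟩)
      · exact Set.mem_insert_iff.mpr (Or.inl h2)
    · intro h
      rcases Set.mem_insert_iff.mp h with rfl | ⟨h1, h2⟩
      · exact (hadjT₁ e (Sum.inl v₁)).mpr (Or.inr ⟨hee.symm, rfl⟩)
      · exact (hadjT₁ e y).mpr (Or.inl ⟨h1, fun hc => h2 hc.2⟩)
  -- cardinality decrease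
  have haTmem : a ∈ T.edgeSet := haT
  have haT'mem : a ∉ T'.edgeSet := haT'
  have hbT'mem : b ∈ T'.edgeSet := hpq
  have hsubE : T₁.edgeSet \ T'.edgeSet ⊆ (T.edgeSet \ T'.edgeSet) \ {a} := by
    rintro ed ⟨h1, h2⟩
    rw [hT₁_def, SimpleGraph.edgeSet_sup] at h1
    rcases h1 with h1 | h1
    · rw [hD_def, SimpleGraph.edgeSet_deleteEdges] at h1
      exact ⟨⟨h1.1, h2⟩, by simpa using h1.2⟩
    · rw [SimpleGraph.edgeSet_fromEdgeSet] at h1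
      obtain ⟨h1, -⟩ := h1
      rw [Set.mem_singleton_iff] at h1
      subst h1
      exact absurd hbT'mem h2
  have hcard : (T₁.edgeSet \ T'.edgeSet).ncard + 1 ≤ (T.edgeSet \ T'.edgeSet).ncard := by
    have h1 : (T₁.edgeSet \ T'.edgeSet).ncard ≤ ((T.edgeSet \ T'.edgeSet) \ {a}).ncard :=
      Set.ncard_le_ncard hsubE (Set.toFinite _)
    have h2 : a ∈ T.edgeSet \ T'.edgeSet := ⟨haTmem, haT'mem⟩
    have h3 := Set.ncard_diff_singleton_of_mem h2
    have h4 : 0 < (T.edgeSet \ T'.edgeSet).ncard :=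
      (Set.ncard_pos (Set.toFinite _)).mpr ⟨a, h2⟩
    omega
  -- conclude
  refine ⟨T₁, e₁', hT₁sp, hcard, ?_⟩
  have hv₀mem : Sum.inl v₀ ∈ T.neighborSet (Sum.inr e) := haT
  by_cases hee : e₁' = e
  · left
    refine ⟨hee, fun x => ?_⟩
    by_cases hx : x = e
    · have hnm : Sum.inl v₁ ∉ T.neighborSet (Sum.inr e) \ {Sum.inl v₀} := by
        intro hc
        apply hnadj'
        rw [hee]
        exact hc.1
      have hpos : 0 < (T.neighborSet (Sum.inr e)).ncard :=
        (Set.ncard_pos (Set.toFinite _)).mpr ⟨_, hv₀mem⟩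
      rw [hx, degE, degE, hNe_same hee,
        Set.ncard_insert_of_notMem hnm (Set.toFinite _),
        Set.ncard_diff_singleton_of_mem hv₀mem]
      omega
    · rw [degE, degE, hNe_other x hx (fun hc => hx (hc.trans hee))]
  · right
    refine ⟨hee, fun x => ?_⟩
    by_cases hx1 : x = e
    · rw [hx1, if_pos rfl, degE, degE, hNe_e (fun hc => hee hc.symm),
        Set.ncard_diff_singleton_of_mem hv₀mem]
    · rw [if_neg hx1]
      by_cases hx2 : x = e₁'
      · have hnm : Sum.inl v₁ ∉ T.neighborSet (Sum.inr e₁') := hnadj'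
        rw [hx2, if_pos rfl, degE, degE, hNe_e' hee,
          Set.ncard_insert_of_notMem hnm (Set.toFinite _)]
      · rw [if_neg hx2, degE, degE, hNe_other x hx1 hx2]

lemma exchange {V E : Type*} [Fintype V] [Fintype E] {r : V → E → Prop}
    {T' : SimpleGraph (V ⊕ E)} (hT' : IsSpanningTree (BipGraph r) T') :
    ∀ (n : ℕ) (T : SimpleGraph (V ⊕ E)), IsSpanningTree (BipGraph r) T →
      (T.edgeSet \ T'.edgeSet).ncard ≤ n →
      ∀ e : E, degE T' e < degE T e →
      ∃ e', degE T e' < degE T' e' ∧ ∃ T'', IsSpanningTree (BipGraph r) T'' ∧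
        ∀ x : E, degE T'' x = if x = e then degE T e - 1
          else if x = e' then degE T x + 1 else degE T x := by
  intro n
  induction n with
  | zero =>
    intro T hT hn e he
    obtain ⟨T₁, e'', hsp, hcard, -⟩ := step ⟨hT.1, hT.2.1, hT.2.2⟩ hT' he
    omega
  | succ n ih =>
    intro T hT hn e he
    obtain ⟨T₁, e'', hsp, hcard, hcase⟩ := step ⟨hT.1, hT.2.1, hT.2.2⟩ hT' he
    have hn₁ : (T₁.edgeSet \ T'.edgeSet).ncard ≤ n := by omega
    rcases hcase with ⟨heq, hdeq⟩ | ⟨hne, hdeg⟩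
    · obtain ⟨e₄, h4, T₂, hsp₂, hform⟩ := ih T₁ hsp hn₁ e (by rw [hdeq]; exact he)
      refine ⟨e₄, by rw [← hdeq]; exact h4, T₂, hsp₂, fun x => ?_⟩
      simpa only [hdeq] using hform x
    · by_cases hlt : degE T e'' < degE T' e''
      · exact ⟨e'', hlt, T₁, hsp, hdeg⟩
      · push_neg at hlt
        have hv1 : degE T₁ e'' = degE T e'' + 1 := by
          rw [hdeg e'', if_neg hne, if_pos rfl]
        have hve : degE T₁ e = degE T e - 1 := by rw [hdeg e, if_pos rfl]
        have hvx : ∀ y, y ≠ e → y ≠ e'' → degE T₁ y = degE T y := fun y h1 h2 => by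
          rw [hdeg y, if_neg h1, if_neg h2]
        have he'' : degE T' e'' < degE T₁ e'' := by omega
        obtain ⟨e₄, h4, T₂, hsp₂, hform⟩ := ih T₁ hsp hn₁ e'' he''
        have h41 : e₄ ≠ e'' := by
          intro hc
          rw [hc] at h4
          omega
        have h42 : e₄ ≠ e := by
          intro hc
          rw [hc, hve] at h4
          omega
        have h43 : degE T e₄ < degE T' e₄ := by
          rw [← hvx e₄ h42 h41]
          exact h4
        refine ⟨e₄, h43, T₂, hsp₂, fun x => ?_⟩
        rw [hform x]
        by_cases hx1 : x = e
        · rw [hx1, if_neg (Ne.symm hne), if_neg (Ne.symm h42), if_pos rfl, hve]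
        · by_cases hx3 : x = e₄
          · rw [hx3, if_neg h41, if_pos rfl, if_neg h42, if_pos rfl, hvx e₄ h42 h41]
          · by_cases hx2 : x = e''
            · rw [hx2, if_pos rfl, hv1, if_neg hne, if_neg (Ne.symm h41)]
              omega
            · rw [if_neg hx2, if_neg hx3, if_neg hx1, if_neg hx3, hvx x hx1 hx2]

lemma no_exchange {V E : Type*} [Fintype V] [Fintype E] {r : V → E → Prop}
    {T T' : SimpleGraph (V ⊕ E)} (hT : IsSpanningTree (BipGraph r) T)
    (hT' : IsSpanningTree (BipGraph r) T')
    {e : E} (he : degE T' e < degE T e)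
    (hall : ∀ x, degE T' x ≤ degE T x) : False := by
  obtain ⟨e', h1, -⟩ := exchange hT' ((T.edgeSet \ T'.edgeSet).ncard) T hT le_rfl e he
  exact absurd (hall e') (not_le.mpr h1)

end TransferTransAux


/-- transitivity of transfers of valence. -/
theorem transfer_trans {V E : Type*} [Fintype V] [Fintype E] (r : V → E → Prop)
    (hconn : (BipGraph r).Connected) (f : E → ℕ) (hf : IsHypertree r f)
    (e₁ e₂ e₃ : E) (h12 : e₁ ≠ e₂) (h23 : e₂ ≠ e₃) (h13 : e₁ ≠ e₃)
    (ht12 : IsHypertree r (Transfer f e₁ e₂)) (ht23 : IsHypertree r (Transfer f e₂ e₃)) :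
    IsHypertree r (Transfer f e₁ e₃) := by
  classical
  obtain ⟨T0, hT0, hd0⟩ := hf
  obtain ⟨S', hS', hd12⟩ := ht12
  obtain ⟨S, hS, hd23⟩ := ht23
  have vT0 : ∀ x, TransferTransAux.degE T0 x = f x + 1 := hd0
  have vS' : ∀ x, TransferTransAux.degE S' x = Transfer f e₁ e₂ x + 1 := hd12
  have vS : ∀ x, TransferTransAux.degE S x = Transfer f e₂ e₃ x + 1 := hd23
  have q12_1 : Transfer f e₁ e₂ e₁ = f e₁ - 1 := by simp [Transfer]
  have q12_2 : Transfer f e₁ e₂ e₂ = f e₂ + 1 := by simp [Transfer, Ne.symm h12]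
  have q12_o : ∀ x, x ≠ e₁ → x ≠ e₂ → Transfer f e₁ e₂ x = f x := by
    intro x hx1 hx2; simp [Transfer, hx1, hx2]
  have q23_1 : Transfer f e₂ e₃ e₂ = f e₂ - 1 := by simp [Transfer]
  have q23_2 : Transfer f e₂ e₃ e₃ = f e₃ + 1 := by simp [Transfer, Ne.symm h23]
  have q23_o : ∀ x, x ≠ e₂ → x ≠ e₃ → Transfer f e₂ e₃ x = f x := by
    intro x hx1 hx2; simp [Transfer, hx1, hx2]
  have q13_1 : Transfer f e₁ e₃ e₁ = f e₁ - 1 := by simp [Transfer]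
  have q13_2 : Transfer f e₁ e₃ e₃ = f e₃ + 1 := by simp [Transfer, Ne.symm h13]
  have q13_o : ∀ x, x ≠ e₁ → x ≠ e₃ → Transfer f e₁ e₃ x = f x := by
    intro x hx1 hx2; simp [Transfer, hx1, hx2]
  -- `f e₁ ≥ 1`, else the tree for `Transfer f e₁ e₂` would have one more edge than that for `f`
  have h1 : 1 ≤ f e₁ := by
    by_contra hc
    push_neg at hc
    refine TransferTransAux.no_exchange hS' hT0 (e := e₂) ?_ ?_
    · rw [vT0 e₂, vS' e₂, q12_2]; omega
    · intro x
      rw [vT0 x, vS' x]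
      by_cases hx1 : x = e₁
      · rw [hx1, q12_1]; omega
      · by_cases hx2 : x = e₂
        · rw [hx2, q12_2]; omega
        · rw [q12_o x hx1 hx2]
  -- `f e₂ ≥ 1` similarly, using the trees for `Transfer f e₂ e₃` and `f`
  have h2 : 1 ≤ f e₂ := by
    by_contra hc
    push_neg at hc
    refine TransferTransAux.no_exchange hS hT0 (e := e₃) ?_ ?_
    · rw [vT0 e₃, vS e₃, q23_2]; omega
    · intro x
      rw [vT0 x, vS x]
      by_cases hx1 : x = e₂
      · rw [hx1, q23_1]; omega
      · by_cases hx2 : x = e₃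
        · rw [hx2, q23_2]; omega
        · rw [q23_o x hx1 hx2]
  -- main exchange between the trees for `Transfer f e₂ e₃` and `Transfer f e₁ e₂`, at `e₁`
  have hgap : TransferTransAux.degE S' e₁ < TransferTransAux.degE S e₁ := by
    rw [vS' e₁, vS e₁, q12_1, q23_o e₁ h12 h13]; omega
  obtain ⟨e', hlt, T'', hsp, hform⟩ :=
    TransferTransAux.exchange hS' ((S.edgeSet \ S'.edgeSet).ncard) S hS le_rfl e₁ hgap
  have he' : e' = e₂ := by
    by_contra hc
    rw [vS e', vS' e'] at hlt
    by_cases hx1 : e' = e₁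
    · rw [hx1, q12_1, q23_o e₁ h12 h13] at hlt; omega
    · by_cases hx3 : e' = e₃
      · rw [hx3, q12_o e₃ (Ne.symm h13) (Ne.symm h23), q23_2] at hlt; omega
      · rw [q12_o e' hx1 hc, q23_o e' hc hx3] at hlt; omega
  rw [he'] at hform
  refine ⟨T'', hsp, fun x => ?_⟩
  show TransferTransAux.degE T'' x = Transfer f e₁ e₃ x + 1
  rw [hform x]
  by_cases hx1 : x = e₁
  · rw [hx1, if_pos rfl, vS e₁, q23_o e₁ h12 h13, q13_1]
    omega
  · rw [if_neg hx1]
    by_cases hx2 : x = e₂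
    · rw [hx2, if_pos rfl, vS e₂, q23_1, q13_o e₂ (Ne.symm h12) h23]
      omega
    · rw [if_neg hx2]
      by_cases hx3 : x = e₃
      · rw [hx3, vS e₃, q23_2, q13_2]
      · rw [vS x, q23_o x hx2 hx3, q13_o x hx1 hx3]
end

section
/- Let G be a connected bipartite graph with colour classes V and E having a 2-vertex cut {e₁, e₂} ⊆ E, and let t be the number of connected components of G − {e₁, e₂}. Then the degree of the interior polynomial I_G(x) is at most min{|E| − 1, |V| − t + 1}. -/
open SimpleGraph

variable {V E : Type*}

lemma bip_adj_inr {r : V → E → Prop} {e : E} {x : V ⊕ E} (h : (BipGraph r).Adj (Sum.inr e) x) :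
    ∃ v, x = Sum.inl v := by
  rcases h with ⟨v, e', h1, h2, h3⟩ | ⟨v, e', h1, h2, h3⟩
  · exact absurd h1 (by simp)
  · exact ⟨v, h2⟩


lemma card_edge_eq_sum (r : V → E → Prop) [Fintype V] [Fintype E]
    (τ : SimpleGraph (V ⊕ E)) (hle : τ ≤ BipGraph r) :
    Nat.card τ.edgeSet = ∑ e : E, (τ.neighborSet (Sum.inr e)).ncard := by
  classical
  have hbij : Function.Bijective
      (fun p : (Σ e : E, ↥(τ.neighborSet (Sum.inr e))) =>
        (⟨s(Sum.inr p.1, p.2.1), τ.mem_edgeSet.mpr p.2.2⟩ : ↥τ.edgeSet)) := by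
    constructor
    · rintro ⟨e, x, hx⟩ ⟨e', x', hx'⟩ hp
      simp only [Subtype.mk.injEq, Sym2.eq, Sym2.rel_iff', Prod.mk.injEq, Prod.swap_prod_mk] at hp
      rcases hp with ⟨h1, h2⟩ | ⟨h1, h2⟩
      · cases h1; cases h2; rfl
      · obtain ⟨v, hv⟩ := bip_adj_inr (hle hx)
        rw [hv] at h2; exact absurd h2.symm (by simp)
    · rintro ⟨z, hz⟩
      induction z using Sym2.ind with
      | _ p q =>
      have hadj : τ.Adj p q := τ.mem_edgeSet.mp hz
      rcases hle hadj with ⟨v, e, rfl, rfl, _⟩ | ⟨v, e, rfl, rfl, _⟩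
      · exact ⟨⟨e, Sum.inl v, hadj.symm⟩, by simp [Sym2.eq_swap]⟩
      · exact ⟨⟨e, Sum.inl v, hadj⟩, rfl⟩
  rw [← Nat.card_eq_of_bijective _ hbij, Nat.card_eq_fintype_card, Fintype.card_sigma]
  congr 1
  ext e
  rw [← Nat.card_eq_fintype_card, Nat.card_coe_set_eq]


lemma sum_hypertree {r : V → E → Prop} [Fintype V] [Fintype E] {f : E → ℕ}
    (hf : IsHypertree r f) : (∑ e, f e) + 1 = Fintype.card V := by
  classical
  obtain ⟨τ, ⟨hle, hconn, hacyc⟩, hdeg⟩ := hf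
  letI : Fintype ↥τ.edgeSet := Fintype.ofFinite _
  have htree : τ.IsTree := ⟨hconn, hacyc⟩
  have hcard := htree.card_edgeFinset
  have h1 : τ.edgeFinset.card = Nat.card τ.edgeSet := by
    have := Set.ncard_coe_finset τ.edgeFinset
    rw [SimpleGraph.coe_edgeFinset] at this
    rw [Nat.card_coe_set_eq]
    exact this.symm
  rw [h1, card_edge_eq_sum r τ hle] at hcard
  simp only [hdeg] at hcard
  rw [Finset.sum_add_distrib, Finset.sum_const, Finset.card_univ, smul_eq_mul, mul_one,
    Fintype.card_sum] at hcard
  omega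


lemma one_le_of_transfer {r : V → E → Prop} [Fintype V] [Fintype E] {f : E → ℕ} {e e' : E}
    (hne : e' ≠ e) (hf : IsHypertree r f) (hg : IsHypertree r (Transfer f e e')) :
    1 ≤ f e := by
  classical
  by_contra h
  have hfe : f e = 0 := by omega
  have hsum : ∑ x, Transfer f e e' x = (∑ x, f x) + 1 := by
    rw [← Finset.sum_erase_add _ _ (Finset.mem_univ e'),
        ← Finset.sum_erase_add _ f (Finset.mem_univ e')]
    have h1 : ∀ x ∈ Finset.univ.erase e', Transfer f e e' x = f x := by
      intro x hx
      have hx' : x ≠ e' := Finset.ne_of_mem_erase hx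
      by_cases hxe : x = e
      · subst hxe; simp [Transfer, hfe]
      · simp [Transfer, hxe, hx']
    rw [Finset.sum_congr rfl h1]
    have h2 : Transfer f e e' e' = f e' + 1 := by simp [Transfer, hne]
    have h3 : ∑ x ∈ Finset.univ.erase e', f x = (Finset.univ.erase e').sum f := rfl
    omega
  have := sum_hypertree hf
  have := sum_hypertree hg
  omega


lemma firstHit' {α : Type*} (H : SimpleGraph α) (a b : α) :
    ∀ {x y : α} (q : H.Walk x y) (hx : x ≠ a ∧ x ≠ b), (y = a ∨ y = b) →
    ∃ (z c : α) (hz : z ≠ a ∧ z ≠ b), H.Adj z c ∧ (c = a ∨ c = b) ∧ c ∈ q.support ∧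
      (H.induce {v | v ≠ a ∧ v ≠ b}).Reachable ⟨x, hx⟩ ⟨z, hz⟩ := by
  intro x y q
  induction q with
  | nil => intro hx hy; rcases hy with rfl | rfl
           · exact absurd rfl hx.1
           · exact absurd rfl hx.2
  | @cons u v w h q ih =>
    intro hx hy
    by_cases hv : v = a ∨ v = b
    · exact ⟨u, v, hx, h, hv, by simp [SimpleGraph.Walk.support_cons, q.start_mem_support],
        Reachable.refl _⟩
    · push_neg at hv
      obtain ⟨z, c, hz, hadj, hc, hmem, hreach⟩ := ih hv hy
      refine ⟨z, c, hz, hadj, hc, by simp [SimpleGraph.Walk.support_cons, hmem], ?_⟩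
      have hadj' : (H.induce {v | v ≠ a ∧ v ≠ b}).Adj ⟨u, hx⟩ ⟨v, hv⟩ := by simpa using h
      exact hadj'.reachable.trans hreach


lemma cut_bound (r : V → E → Prop) [Fintype V] [Fintype E] {e₁ e₂ : E} (hne : e₁ ≠ e₂)
    {f : E → ℕ} (hf : IsHypertree r f) :
    Nat.card ((BipGraph r).induce
        {x | x ≠ Sum.inr e₁ ∧ x ≠ Sum.inr e₂}).ConnectedComponent ≤ f e₁ + f e₂ + 1 := by
  classical
  obtain ⟨τ, ⟨hle, hconn, hacyc⟩, hdeg⟩ := hf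
  have hab : ¬ τ.Adj (Sum.inr e₂) (Sum.inr e₁) := by
    intro h
    rcases hle h with ⟨v, e, h1, h2, h3⟩ | ⟨v, e, h1, h2, h3⟩
    · exact absurd h1 (by simp)
    · exact absurd h2 (by simp)
  obtain ⟨w0⟩ := hconn.preconnected (Sum.inr e₂) (Sum.inr e₁)
  obtain ⟨p, hp⟩ := w0.toPath
  cases p with
  | nil => exact absurd rfl hne
  | @cons _ w _ h q =>
    rw [SimpleGraph.Walk.cons_isPath_iff] at hp
    obtain ⟨hqpath, hnots⟩ := hp
    have hw2 : w ≠ Sum.inr e₂ := fun hh => hnots (hh ▸ q.start_mem_support)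
    have hw1 : w ≠ Sum.inr e₁ := fun hh => hab (hh ▸ h)
    set T : Set (V ⊕ E) :=
      {y | τ.Adj (Sum.inr e₁) y ∨ (τ.Adj (Sum.inr e₂) y ∧ y ≠ w)} with hT
    have memT_s : ∀ y ∈ T, y ≠ Sum.inr e₁ ∧ y ≠ Sum.inr e₂ := by
      rintro y (hy | ⟨hy, -⟩) <;>
        · obtain ⟨v, rfl⟩ := bip_adj_inr (hle hy); simp
    have hmono : τ.induce {x | x ≠ Sum.inr e₁ ∧ x ≠ Sum.inr e₂} ≤
        (BipGraph r).induce {x | x ≠ Sum.inr e₁ ∧ x ≠ Sum.inr e₂} := fun _ _ hh => hle hh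
    have hsurj : Function.Surjective
        (fun y : ↥T => ((BipGraph r).induce
          {x | x ≠ Sum.inr e₁ ∧ x ≠ Sum.inr e₂}).connectedComponentMk
            ⟨y.1, memT_s y.1 y.2⟩) := by
      intro K
      obtain ⟨⟨x, hx⟩, rfl⟩ := K.exists_rep
      obtain ⟨q0⟩ := hconn.preconnected x (Sum.inr e₁)
      obtain ⟨z, c, hz, hadj, hc, -, hreach⟩ :=
        firstHit' τ (Sum.inr e₁) (Sum.inr e₂) q0 hx (Or.inl rfl)
      have hreach' := (hreach.mono hmono).symm
      rcases hc with rfl | rfl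
      · exact ⟨⟨z, Or.inl hadj.symm⟩, ConnectedComponent.sound hreach'⟩
      · by_cases hzw : z = w
        · subst hzw
          obtain ⟨z₂, c₂, hz₂, hadj₂, hc₂, hmem₂, hreach₂⟩ :=
            firstHit' τ (Sum.inr e₁) (Sum.inr e₂) q ⟨hw1, hw2⟩ (Or.inl rfl)
          have hc₂' : c₂ = Sum.inr e₁ := by
            rcases hc₂ with rfl | rfl
            · rfl
            · exact absurd hmem₂ hnots
          subst hc₂'
          refine ⟨⟨z₂, Or.inl hadj₂.symm⟩, ConnectedComponent.sound ?_⟩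
          exact ((hreach₂.mono hmono).symm.trans hreach')
        · exact ⟨⟨z, Or.inr ⟨hadj.symm, hzw⟩⟩, ConnectedComponent.sound hreach'⟩
    have hcard := Nat.card_le_card_of_surjective _ hsurj
    refine hcard.trans ?_
    rw [Nat.card_coe_set_eq]
    have hsub : T ⊆ τ.neighborSet (Sum.inr e₁) ∪ (τ.neighborSet (Sum.inr e₂) \ {w}) := by
      rintro y (hy | ⟨hy, hyw⟩)
      · exact Or.inl hy
      · exact Or.inr ⟨hy, hyw⟩
    refine (Set.ncard_le_ncard hsub (Set.toFinite _)).trans ?_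
    refine (Set.ncard_union_le _ _).trans ?_
    have h1 := hdeg e₁
    have h2 : (τ.neighborSet (Sum.inr e₂) \ {w}).ncard = f e₂ := by
      have hwmem : w ∈ τ.neighborSet (Sum.inr e₂) := h
      rw [Set.ncard_diff_singleton_of_mem hwmem, hdeg e₂]
      omega
    omega


lemma key_bound (r : V → E → Prop) [Fintype V] [Fintype E] [LinearOrder E]
    {e₁ e₂ : E} (hne : e₁ ≠ e₂) {f : E → ℕ} (hf : IsHypertree r f) :
    intInact r f ≤
      min (Fintype.card E - 1)
        (Fintype.card V -
          Nat.card ((BipGraph r).induce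
            {x | x ≠ Sum.inr e₁ ∧ x ≠ Sum.inr e₂}).ConnectedComponent + 1) := by
  classical
  haveI : Nonempty E := ⟨e₁⟩
  set t := Nat.card ((BipGraph r).induce
            {x | x ≠ Sum.inr e₁ ∧ x ≠ Sum.inr e₂}).ConnectedComponent with ht
  set D : Finset E :=
    Finset.univ.filter (fun e => ∃ e', e' < e ∧ IsHypertree r (Transfer f e e')) with hD
  have hmemD : ∀ e ∈ D, ∃ e', e' < e ∧ IsHypertree r (Transfer f e e') :=
    fun e he => (Finset.mem_filter.mp he).2
  have hII : intInact r f = D.card := by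
    rw [intInact, Nat.card_eq_fintype_card, Fintype.card_subtype]
  have hone : ∀ e ∈ D, 1 ≤ f e := by
    intro e he
    obtain ⟨e', hlt, hg⟩ := hmemD e he
    exact one_le_of_transfer (ne_of_lt hlt) hf hg
  -- Bound 1 : |E| - 1
  have hbound1 : D.card ≤ Fintype.card E - 1 := by
    have hm : Finset.univ.min' Finset.univ_nonempty ∉ D := by
      intro hmem
      obtain ⟨e', hlt, -⟩ := hmemD _ hmem
      exact absurd (Finset.univ.min'_le e' (Finset.mem_univ e')) (not_le.mpr hlt)
    have hsub : D ⊆ Finset.univ.erase (Finset.univ.min' Finset.univ_nonempty) := by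
      intro e he
      exact Finset.mem_erase.mpr ⟨fun hh => hm (hh ▸ he), Finset.mem_univ e⟩
    calc D.card ≤ _ := Finset.card_le_card hsub
      _ = Fintype.card E - 1 := by
        rw [Finset.card_erase_of_mem (Finset.mem_univ _), Finset.card_univ]
  -- Bound 2 : |V| - t + 1
  have hsumf := sum_hypertree hf
  have hbase : t ≤ f e₁ + f e₂ + 1 := cut_bound r hne hf
  have hsplit : (∑ e ∈ Finset.univ \ {e₁, e₂}, f e) + (f e₁ + f e₂) = ∑ e, f e := by
    rw [← Finset.sum_pair hne]
    exact Finset.sum_sdiff (Finset.subset_univ _)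
  have hS : (D \ {e₁, e₂}).card ≤ ∑ e ∈ Finset.univ \ {e₁, e₂}, f e := by
    calc (D \ {e₁, e₂}).card = ∑ e ∈ D \ {e₁, e₂}, 1 := by
          rw [Finset.sum_const, smul_eq_mul, mul_one]
      _ ≤ ∑ e ∈ D \ {e₁, e₂}, f e := Finset.sum_le_sum (fun e he =>
          hone e (Finset.mem_sdiff.mp he).1)
      _ ≤ ∑ e ∈ Finset.univ \ {e₁, e₂}, f e := Finset.sum_le_sum_of_subset
          (Finset.sdiff_subset_sdiff (Finset.subset_univ _) le_rfl)
  have hDsplit : (D \ {e₁, e₂}).card + (D ∩ {e₁, e₂}).card = D.card :=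
    Finset.card_sdiff_add_card_inter D {e₁, e₂}
  have hbound2 : D.card ≤ Fintype.card V - t + 1 := by
    by_cases hboth : e₁ ∈ D ∧ e₂ ∈ D
    · -- strong bound t ≤ f e₁ + f e₂
      have main : ∀ a b : E, a < b → a ∈ D → b ∈ D →
          (∀ g : E → ℕ, IsHypertree r g → t ≤ g a + g b + 1) → t ≤ f a + f b := by
        intro a b hab haD hbD hcb
        obtain ⟨e', hlt, hg⟩ := hmemD b hbD
        by_cases he' : e' = a
        · obtain ⟨e'', hlt'', hh⟩ := hmemD a haD
          have h1 : 1 ≤ f a := one_le_of_transfer (ne_of_lt hlt'') hf hh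
          have h2 := hcb _ hh
          have ha' : Transfer f a e'' a = f a - 1 := by simp [Transfer]
          have hb' : Transfer f a e'' b = f b := by
            have hba : b ≠ a := hab.ne'
            have hbe : b ≠ e'' := ne_of_gt (hlt''.trans hab)
            simp [Transfer, hba, hbe]
          omega
        · have h1 : 1 ≤ f b := one_le_of_transfer (ne_of_lt hlt) hf hg
          have h2 := hcb _ hg
          have hb' : Transfer f b e' b = f b - 1 := by simp [Transfer]
          have ha' : Transfer f b e' a = f a := by
            have hab' : a ≠ b := hab.ne
            have hae : a ≠ e' := fun hh => he' hh.symm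
            simp [Transfer, hab', hae]
          omega
      have hstrong : t ≤ f e₁ + f e₂ := by
        rcases hne.lt_or_gt with h12 | h21
        · exact main e₁ e₂ h12 hboth.1 hboth.2 (fun g hg => cut_bound r hne hg)
        · have := main e₂ e₁ h21 hboth.2 hboth.1 (fun g hg => by
            have := cut_bound r hne hg; omega)
          omega
      have hk : (D ∩ {e₁, e₂}).card ≤ 2 := by
        calc (D ∩ {e₁, e₂}).card ≤ ({e₁, e₂} : Finset E).card :=
              Finset.card_le_card (Finset.inter_subset_right)
          _ = 2 := Finset.card_pair hne
      omega
    · have hk : (D ∩ {e₁, e₂}).card ≤ 1 := by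
        rw [Finset.card_le_one]
        intro x hx y hy
        obtain ⟨hxD, hx2⟩ := Finset.mem_inter.mp hx
        obtain ⟨hyD, hy2⟩ := Finset.mem_inter.mp hy
        simp only [Finset.mem_insert, Finset.mem_singleton] at hx2 hy2
        rcases hx2 with rfl | rfl <;> rcases hy2 with rfl | rfl <;>
          first | rfl | (exact absurd ⟨by assumption, by assumption⟩ hboth) |
            (exact absurd ⟨by assumption, by assumption⟩ (fun hh => hboth ⟨hh.1, hh.2⟩))
      omega
  rw [hII]
  exact le_min hbound1 hbound2


/-- for a connected bipartite graph with a 2-vertex cut `{e₁, e₂} ⊆ E`,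
`deg I_G ≤ min (|E| - 1) (|V| - t + 1)` where `t` is the number of components of
`G - {e₁, e₂}`. -/
theorem interiorPoly_degree_of_cut {V E : Type*} [Fintype V] [Fintype E] [LinearOrder E]
    (r : V → E → Prop) (hconn : (BipGraph r).Connected) (e₁ e₂ : E) (hne : e₁ ≠ e₂)
    (hcut : ¬ ((BipGraph r).induce {x | x ≠ Sum.inr e₁ ∧ x ≠ Sum.inr e₂}).Connected) :
    (interiorPoly r).natDegree ≤
      min (Fintype.card E - 1)
        (Fintype.card V -
          Nat.card ((BipGraph r).induce
            {x | x ≠ Sum.inr e₁ ∧ x ≠ Sum.inr e₂}).ConnectedComponent + 1) := by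
  classical
  rw [interiorPoly]
  apply Polynomial.natDegree_sum_le_of_forall_le
  intro i hi
  by_cases hiB : i ≤ min (Fintype.card E - 1)
      (Fintype.card V -
        Nat.card ((BipGraph r).induce
          {x | x ≠ Sum.inr e₁ ∧ x ≠ Sum.inr e₂}).ConnectedComponent + 1)
  · refine le_trans ?_ hiB
    refine (Polynomial.natDegree_C_mul_le _ _).trans ?_
    simp [Polynomial.natDegree_X_pow]
  · have hempty : IsEmpty {f : E → ℕ // IsHypertree r f ∧ intInact r f = i} := by
      constructor
      rintro ⟨f, hf, hint⟩
      exact hiB (hint ▸ key_bound r hne hf)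
    rw [Nat.card_of_isEmpty]
    simp
end
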